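/- arXiv:1105.4054 — 7 statements merged into one kernel-verified Lean document; each statement's English description precedes it below -/
import Mathlib

section
/- Let f : ℝⁿ → ℝⁿ be a C¹ vector field with global flow Φ, and let F : ℝⁿ → ℝᵏ (k ≤ n) be a C¹ conserved quantity for ẋ = f(x). For s ∈ {0,...,k} define M⁽ˢ⁾ = { x ∈ ℝⁿ : rank ∇F(x) = s }. Then each set M⁽ˢ⁾ is invariant under the flow: for every x ∈ M⁽ˢ⁾ and every t ∈ ℝ, Φ_t(x) ∈ M⁽ˢ⁾. Equivalently, the rank of the Jacobian matrix ∇F is constant along every trajectory of the flow. -/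
/-- For a `C¹` conserved quantity `F : ℝⁿ → ℝᵏ` of the flow `Φ` of a `C¹` vector
field `f`, each level set of the rank of the Jacobian of `F`,
`M⁽ˢ⁾ = {x | rank ∇F(x) = s}`, is invariant under the flow. -/
theorem rank_level_sets_invariant
    (n k : ℕ) (hkn : k ≤ n)
    (f : (Fin n → ℝ) → (Fin n → ℝ)) (hf : ContDiff ℝ 1 f)
    (Φ : ℝ → (Fin n → ℝ) → (Fin n → ℝ))
    (hΦ0 : Φ 0 = id)
    (hΦadd : ∀ t s : ℝ, Φ (t + s) = Φ t ∘ Φ s)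
    (hΦC1 : ∀ t : ℝ, ContDiff ℝ 1 (Φ t))
    (hΦode : ∀ (t : ℝ) (x : Fin n → ℝ),
      HasDerivAt (fun τ : ℝ => Φ τ x) (f (Φ t x)) t)
    (F : (Fin n → ℝ) → (Fin k → ℝ)) (hF : ContDiff ℝ 1 F)
    (hFcons : ∀ (t : ℝ) (x : Fin n → ℝ), F (Φ t x) = F x) :
    ∀ s : ℕ, s ≤ k → ∀ x : Fin n → ℝ,
      Module.finrank ℝ (LinearMap.range (fderiv ℝ F x : (Fin n → ℝ) →ₗ[ℝ] (Fin k → ℝ))) = s →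
      ∀ t : ℝ,
        Module.finrank ℝ (LinearMap.range (fderiv ℝ F (Φ t x) : (Fin n → ℝ) →ₗ[ℝ] (Fin k → ℝ))) = s := by
  intro s hs x hx t
  have hFd : Differentiable ℝ F := hF.differentiable one_ne_zero
  have hΦd : ∀ τ : ℝ, Differentiable ℝ (Φ τ) := fun τ => (hΦC1 τ).differentiable one_ne_zero
  -- Φ t ∘ Φ (-t) = id
  have hinv : Φ t ∘ Φ (-t) = id := by
    rw [← hΦadd]; simpa using hΦ0
  -- let B = fderiv (Φ t) x, C = fderiv (Φ (-t)) (Φ t x)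
  set B := fderiv ℝ (Φ t) x with hB
  set C := fderiv ℝ (Φ (-t)) (Φ t x) with hC
  -- B ∘ C = id via chain rule applied to Φ t ∘ Φ (-t) at Φ t x
  have hΦinvpt : Φ (-t) (Φ t x) = x := by
    have : (Φ (-t) ∘ Φ t) x = id x := by
      rw [← hΦadd]; simp [hΦ0]
    simpa using this
  have hBC : B.comp C = ContinuousLinearMap.id ℝ (Fin n → ℝ) := by
    have h1 : fderiv ℝ (Φ t ∘ Φ (-t)) (Φ t x) =
        (fderiv ℝ (Φ t) (Φ (-t) (Φ t x))).comp (fderiv ℝ (Φ (-t)) (Φ t x)) :=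
      fderiv_comp _ (hΦd t _) (hΦd (-t) _)
    rw [hinv, hΦinvpt] at h1
    simpa [fderiv_id] using h1.symm
  -- B surjective
  have hBsurj : Function.Surjective B := by
    intro v
    exact ⟨C v, by
      have := congrArg (fun (L : (Fin n → ℝ) →L[ℝ] (Fin n → ℝ)) => L v) hBC
      simpa using this⟩
  -- chain rule: fderiv F x = A ∘ B where A = fderiv F (Φ t x)
  have hchain : fderiv ℝ F x = (fderiv ℝ F (Φ t x)).comp B := by
    have hFeq : F ∘ Φ t = F := funext fun y => hFcons t y
    have := fderiv_comp x (hFd (Φ t x)) (hΦd t x)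
    rw [hFeq] at this
    exact this
  -- ranges equal
  have hrange : LinearMap.range (fderiv ℝ F x : (Fin n → ℝ) →ₗ[ℝ] (Fin k → ℝ)) =
      LinearMap.range (fderiv ℝ F (Φ t x) : (Fin n → ℝ) →ₗ[ℝ] (Fin k → ℝ)) := by
    rw [hchain]
    ext v
    constructor
    · rintro ⟨u, rfl⟩; exact ⟨B u, rfl⟩
    · rintro ⟨u, rfl⟩
      obtain ⟨w, hw⟩ := hBsurj u
      exact ⟨w, by simp [ContinuousLinearMap.comp_apply, hw]⟩
  rw [← hrange]; exact hx
end

section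
/- Let f : ℝⁿ → ℝⁿ be a C¹ vector field with global flow Φ, and let F : ℝⁿ → ℝᵏ (k ≤ n) be a C¹ conserved quantity for ẋ = f(x). Then the set of critical points of F, namely M_c = { x ∈ ℝⁿ : rank ∇F(x) < k }, is invariant under the flow: for every x ∈ M_c and every t ∈ ℝ, Φ_t(x) ∈ M_c. -/
/-- For a `C¹` conserved quantity `F : ℝⁿ → ℝᵏ` of the flow `Φ` of a `C¹` vector
field `f`, the set of critical points of `F`, `M_c = {x | rank ∇F(x) < k}`,
is invariant under the flow. -/
theorem critical_set_invariant
    (n k : ℕ) (hkn : k ≤ n)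
    (f : (Fin n → ℝ) → (Fin n → ℝ)) (hf : ContDiff ℝ 1 f)
    (Φ : ℝ → (Fin n → ℝ) → (Fin n → ℝ))
    (hΦ0 : Φ 0 = id)
    (hΦadd : ∀ t s : ℝ, Φ (t + s) = Φ t ∘ Φ s)
    (hΦC1 : ∀ t : ℝ, ContDiff ℝ 1 (Φ t))
    (hΦode : ∀ (t : ℝ) (x : Fin n → ℝ),
      HasDerivAt (fun τ : ℝ => Φ τ x) (f (Φ t x)) t)
    (F : (Fin n → ℝ) → (Fin k → ℝ)) (hF : ContDiff ℝ 1 F)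
    (hFcons : ∀ (t : ℝ) (x : Fin n → ℝ), F (Φ t x) = F x) :
    ∀ x : Fin n → ℝ,
      Module.finrank ℝ (LinearMap.range ((fderiv ℝ F x : (Fin n → ℝ) →ₗ[ℝ] (Fin k → ℝ)))) < k →
      ∀ t : ℝ,
        Module.finrank ℝ (LinearMap.range ((fderiv ℝ F (Φ t x) : (Fin n → ℝ) →ₗ[ℝ] (Fin k → ℝ)))) < k := by
  intro x hx t
  have hdF : Differentiable ℝ F := hF.differentiable one_ne_zero
  have hdΦ : ∀ s : ℝ, Differentiable ℝ (Φ s) := fun s => (hΦC1 s).differentiable one_ne_zero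
  -- Φ t ∘ Φ (-t) = id
  have hinv : Φ t ∘ Φ (-t) = id := by
    have := hΦadd t (-t)
    simpa [hΦ0] using this.symm
  -- fderiv of Φ t at x composed with fderiv of Φ (-t) at Φ t x is id
  have hsurj : Function.Surjective (fderiv ℝ (Φ t) x) := by
    have hxeq : Φ (-t) (Φ t x) = x := by
      have := congrFun (hΦadd (-t) t) x
      simpa [hΦ0] using this.symm
    have hcomp : fderiv ℝ (Φ t ∘ Φ (-t)) (Φ t x) =
        (fderiv ℝ (Φ t) (Φ (-t) (Φ t x))).comp (fderiv ℝ (Φ (-t)) (Φ t x)) :=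
      fderiv_comp _ ((hdΦ t) _) ((hdΦ (-t)) _)
    rw [hinv, hxeq] at hcomp
    have hid : fderiv ℝ (id : (Fin n → ℝ) → (Fin n → ℝ)) (Φ t x) =
        ContinuousLinearMap.id ℝ (Fin n → ℝ) := fderiv_id
    rw [hid] at hcomp
    intro y
    exact ⟨fderiv ℝ (Φ (-t)) (Φ t x) y, by
      have := congrArg (fun L : (Fin n → ℝ) →L[ℝ] (Fin n → ℝ) => L y) hcomp.symm
      simpa using this⟩
  -- F ∘ Φ t = F, so fderiv F x = fderiv F (Φ t x) ∘ fderiv (Φ t) x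
  have hFcomp : F ∘ Φ t = F := funext fun y => hFcons t y
  have hchain : fderiv ℝ (F ∘ Φ t) x =
      (fderiv ℝ F (Φ t x)).comp (fderiv ℝ (Φ t) x) :=
    fderiv_comp _ (hdF _) ((hdΦ t) _)
  rw [hFcomp] at hchain
  have hrange : LinearMap.range ((fderiv ℝ F x : (Fin n → ℝ) →ₗ[ℝ] (Fin k → ℝ))) =
      LinearMap.range ((fderiv ℝ F (Φ t x) : (Fin n → ℝ) →ₗ[ℝ] (Fin k → ℝ))) := by
    rw [hchain]
    ext y
    constructor
    · rintro ⟨z, rfl⟩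
      exact ⟨fderiv ℝ (Φ t) x z, rfl⟩
    · rintro ⟨z, rfl⟩
      obtain ⟨w, hw⟩ := hsurj z
      exact ⟨w, by simp [hw]⟩
  rwa [← hrange]
end

section
/- Let f : ℝⁿ → ℝⁿ be a vector field with global flow Φ such that each Φ_t is a C^q map (q ≥ 1), and let F = (F₁,...,F_k) : ℝⁿ → ℝᵏ be a C^q conserved quantity for ẋ = f(x). For r ∈ {1,...,q} define N⁽ʳ⁾ = { x ∈ ℝⁿ : ∂^α F_i(x) = 0 for all i ∈ {1,...,k}, all multi-indices α = (α₁,...,α_l) ∈ {1,...,n}^l, and all orders 1 ≤ l ≤ r }, i.e. the set of points where all partial derivatives of all components of F of order between 1 and r vanish. Then each N⁽ʳ⁾ is invariant under the flow: for every x ∈ N⁽ʳ⁾ and every t ∈ ℝ, Φ_t(x) ∈ N⁽ʳ⁾. -/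
/-- For a `C^q` conserved quantity `F : ℝⁿ → ℝᵏ` of a flow `Φ` whose time-`t` maps
are `C^q`, each set `N⁽ʳ⁾` (where all derivatives of `F` of orders `1,…,r` vanish,
`1 ≤ r ≤ q`) is invariant under the flow. -/
theorem vanishing_derivative_sets_invariant
    (n k q : ℕ) (hq : 1 ≤ q)
    (f : (Fin n → ℝ) → (Fin n → ℝ))
    (Φ : ℝ → (Fin n → ℝ) → (Fin n → ℝ))
    (hΦ0 : Φ 0 = id)
    (hΦadd : ∀ t s : ℝ, Φ (t + s) = Φ t ∘ Φ s)
    (hΦCq : ∀ t : ℝ, ContDiff ℝ q (Φ t))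
    (hΦode : ∀ (t : ℝ) (x : Fin n → ℝ),
      HasDerivAt (fun τ : ℝ => Φ τ x) (f (Φ t x)) t)
    (F : (Fin n → ℝ) → (Fin k → ℝ)) (hF : ContDiff ℝ q F)
    (hFcons : ∀ (t : ℝ) (x : Fin n → ℝ), F (Φ t x) = F x) :
    ∀ r : ℕ, 1 ≤ r → r ≤ q →
      ∀ x : Fin n → ℝ,
        (∀ l : ℕ, 1 ≤ l → l ≤ r → iteratedFDeriv ℝ l F x = 0) →
        ∀ t : ℝ, ∀ l : ℕ, 1 ≤ l → l ≤ r → iteratedFDeriv ℝ l F (Φ t x) = 0 := by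
  intro r hr hrq x hx t l hl hlr
  have hlq : l ≤ q := hlr.trans hrq
  have hlq' : (l : WithTop ℕ∞) ≤ (q : WithTop ℕ∞) := by exact_mod_cast hlq
  -- Φ (-t) inverts Φ t
  have hinv : Φ (-t) (Φ t x) = x := by
    have h := congrFun (hΦadd (-t) t) x
    simp only [neg_add_cancel, hΦ0, id_eq, Function.comp_apply] at h
    exact h.symm
  -- shifted function G with G x = 0
  set G : (Fin n → ℝ) → (Fin k → ℝ) := fun y => F y + (-(F x)) with hGdef
  have hG : ContDiff ℝ q G := hF.add contDiff_const
  have hGF : ∀ i : ℕ, i ≠ 0 → i ≤ q → ∀ y,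
      iteratedFDeriv ℝ i G y = iteratedFDeriv ℝ i F y := by
    intro i hi hiq y
    have hFi : ContDiff ℝ i F := hF.of_le (by exact_mod_cast hiq)
    have := iteratedFDeriv_add_apply' (x := y) hFi.contDiffAt (contDiff_const (c := -(F x))).contDiffAt
    rw [hGdef]
    simp only [this, iteratedFDeriv_const_of_ne hi, Pi.zero_apply, add_zero]
  -- G ∘ Φ (-t) = G
  have hcomp : G ∘ Φ (-t) = G := by
    funext y
    simp only [hGdef, Function.comp_apply, hFcons]
  -- derivative bounds for Φ (-t) at Φ t x
  set D : ℝ := 1 + ∑ i ∈ Finset.range (l + 1), ‖iteratedFDeriv ℝ i (Φ (-t)) (Φ t x)‖ with hDdef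
  have hD1 : (1 : ℝ) ≤ D := by
    have : (0 : ℝ) ≤ ∑ i ∈ Finset.range (l + 1), ‖iteratedFDeriv ℝ i (Φ (-t)) (Φ t x)‖ :=
      Finset.sum_nonneg fun i _ => norm_nonneg _
    linarith
  have hD : ∀ i, 1 ≤ i → i ≤ l → ‖iteratedFDeriv ℝ i (Φ (-t)) (Φ t x)‖ ≤ D ^ i := by
    intro i hi hil
    have h1 : ‖iteratedFDeriv ℝ i (Φ (-t)) (Φ t x)‖ ≤ D := by
      have := Finset.single_le_sum (f := fun j => ‖iteratedFDeriv ℝ j (Φ (-t)) (Φ t x)‖)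
        (fun j _ => norm_nonneg _) (Finset.mem_range.2 (Nat.lt_succ_of_le hil))
      linarith
    exact h1.trans (le_self_pow₀ hD1 (by omega))
  -- derivatives of G vanish at x = Φ (-t) (Φ t x)
  have hC : ∀ i, i ≤ l → ‖iteratedFDeriv ℝ i G (Φ (-t) (Φ t x))‖ ≤ 0 := by
    intro i hil
    rw [hinv]
    rcases Nat.eq_zero_or_pos i with hi0 | hi1
    · subst hi0
      rw [norm_iteratedFDeriv_zero]
      simp [hGdef]
    · rw [hGF i (by omega) (hil.trans hlq), hx i hi1 (hil.trans hlr)]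
      simp
  have hb := norm_iteratedFDeriv_comp_le hG (hΦCq (-t)) hlq' (Φ t x) hC hD
  rw [hcomp, hGF l (by omega) hlq] at hb
  simp only [mul_zero, zero_mul] at hb
  exact norm_le_zero_iff.1 hb
end

section
/- Let n ≥ 3 be odd. On ℝ²ⁿ with coordinates (X₁,...,Xₙ,u₁,...,uₙ) define the periodic Toda conserved quantity I₃ = Σ_{1 ≤ i₁ < i₂ < i₃ ≤ n} u_{i₁} u_{i₂} u_{i₃} − Σ_{1 ≤ i,j ≤ n, j ≢ i (mod n), j ≢ i−1 (mod n)} u_i X_j, where X₀ := Xₙ. Then ∇I₃(X,u) = 0 if and only if X₁ = ⋯ = Xₙ = 0 and u₁ = ⋯ = uₙ = 0; i.e. the zero-gradient set M₍₀₎^{I₃} consists only of the origin. -/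
/-- The conserved quantity `I₃` of the periodic Toda lattice, in the variables
`(X₁,…,Xₙ,u₁,…,uₙ)` (indices of `X` and `u` taken modulo `n`). -/
noncomputable def todaPeriodicI3 (n : ℕ) [NeZero n]
    (p : (Fin n → ℝ) × (Fin n → ℝ)) : ℝ :=
  (∑ s ∈ Finset.powersetCard 3 (Finset.univ : Finset (Fin n)), ∏ i ∈ s, p.2 i)
    - ∑ i : Fin n, ∑ j : Fin n,
        if j ≠ i ∧ j ≠ i - 1 then p.2 i * p.1 j else 0

open Fin.CommRing

lemma toda_fin_one_ne_zero (n : ℕ) [NeZero n] (hn : 3 ≤ n) : (1 : Fin n) ≠ 0 := by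
  rw [Ne, Fin.one_eq_zero_iff]
  omega

lemma toda_key_alt (n : ℕ) [NeZero n] (hn : 3 ≤ n) (hodd : Odd n) (a : Fin n → ℝ)
    (h : ∀ k : Fin n, a k + a (k + 1) = ∑ i, a i) : a = 0 := by
  have hstep : ∀ k : Fin n, a (k + 2) = a k := by
    intro k
    have h1 := h k
    have h2 := h (k + 1)
    have h3 : a (k + 1 + 1) = a k := by linarith
    have : k + 1 + 1 = k + 2 := by ring
    rwa [this] at h3
  have hiter : ∀ (j : ℕ) (k : Fin n), a (k + 2 * (j : Fin n)) = a k := by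
    intro j
    induction j with
    | zero => simp
    | succ m ih =>
        intro k
        have hc : ((m + 1 : ℕ) : Fin n) = (m : Fin n) + 1 := by push_cast; ring
        have : k + 2 * ((m + 1 : ℕ) : Fin n) = (k + 2) + 2 * (m : Fin n) := by
          rw [hc]; ring
        rw [this, ih (k + 2), hstep]
  obtain ⟨m, hm⟩ := hodd
  have hconst : ∀ k : Fin n, a (k + 1) = a k := by
    intro k
    have h1 : (2 : Fin n) * ((m + 1 : ℕ) : Fin n) = 1 := by
      have he : (2 * (m + 1) : ℕ) = n + 1 := by omega
      have : ((2 * (m + 1) : ℕ) : Fin n) = ((n + 1 : ℕ) : Fin n) := by rw [he]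
      rw [show ((n + 1 : ℕ) : Fin n) = 1 by push_cast [Fin.natCast_self]; ring] at this
      rw [← this]; push_cast; ring
    have := hiter (m + 1) k
    rwa [h1] at this
  have hall : ∀ k : Fin n, a k = a 0 := by
    have hnat : ∀ j : ℕ, a ((j : ℕ) : Fin n) = a 0 := by
      intro j
      induction j with
      | zero => simp
      | succ m ih => rw [show ((m + 1 : ℕ) : Fin n) = (m : Fin n) + 1 by push_cast; ring,
          hconst, ih]
    intro k
    have := hnat k.val
    rwa [Fin.cast_val_eq_self] at this
  have hsum : ∑ i, a i = n * a 0 := by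
    rw [Finset.sum_congr rfl (fun i _ => hall i), Finset.sum_const, Finset.card_univ,
      Fintype.card_fin, nsmul_eq_mul]
  have h0 := h 0
  rw [hall (0 + 1), hsum] at h0
  have hn3 : (3 : ℝ) ≤ (n : ℝ) := by exact_mod_cast hn
  have ha0 : a 0 = 0 := by nlinarith
  funext k
  rw [hall k, ha0]; rfl

lemma toda_sum_ite_two (n : ℕ) [NeZero n] (u : Fin n → ℝ) (k₁ k₂ : Fin n) (hne : k₁ ≠ k₂) :
    ∑ i : Fin n, (if i ≠ k₁ ∧ i ≠ k₂ then u i else 0)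
      = (∑ i, u i) - (u k₁ + u k₂) := by
  classical
  rw [← Finset.sum_filter]
  have : Finset.filter (fun i => i ≠ k₁ ∧ i ≠ k₂) Finset.univ
      = Finset.univ \ {k₁, k₂} := by
    ext i; simp [and_comm]
  rw [this, Finset.sum_sdiff_eq_sub (Finset.subset_univ _), Finset.sum_pair hne]

lemma toda_coord_diff2 (n : ℕ) [NeZero n] (i : Fin n) :
    Differentiable ℝ (fun p : (Fin n → ℝ) × (Fin n → ℝ) => p.2 i) :=
  ((ContinuousLinearMap.proj i).comp
    (ContinuousLinearMap.snd ℝ (Fin n → ℝ) (Fin n → ℝ))).differentiable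

lemma toda_coord_diff1 (n : ℕ) [NeZero n] (j : Fin n) :
    Differentiable ℝ (fun p : (Fin n → ℝ) × (Fin n → ℝ) => p.1 j) :=
  ((ContinuousLinearMap.proj j).comp
    (ContinuousLinearMap.fst ℝ (Fin n → ℝ) (Fin n → ℝ))).differentiable

lemma toda_diff_prod (n : ℕ) [NeZero n] (s : Finset (Fin n)) :
    Differentiable ℝ (fun p : (Fin n → ℝ) × (Fin n → ℝ) => ∏ i ∈ s, p.2 i) := by
  induction s using Finset.induction with
  | empty => simp only [Finset.prod_empty]; exact differentiable_const (1 : ℝ)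
  | insert _ _ h ih =>
      simp only [Finset.prod_insert h]
      exact (toda_coord_diff2 n _).mul ih

lemma toda_diff (n : ℕ) [NeZero n] : Differentiable ℝ (todaPeriodicI3 n) := by
  unfold todaPeriodicI3
  apply Differentiable.sub
  · exact Differentiable.fun_sum (fun s _ => toda_diff_prod n s)
  · apply Differentiable.fun_sum
    intro i _
    apply Differentiable.fun_sum
    intro j _
    split_ifs
    · exact (toda_coord_diff2 n i).mul (toda_coord_diff1 n j)
    · exact differentiable_const 0

lemma toda_fderiv_X_dir (n : ℕ) [NeZero n] (X u : Fin n → ℝ) (k : Fin n) :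
    fderiv ℝ (todaPeriodicI3 n) (X, u) ((Pi.single k 1 : Fin n → ℝ), 0)
      = -(∑ i : Fin n, if k ≠ i ∧ k ≠ i - 1 then u i else 0) := by
  set c := ∑ i : Fin n, (if k ≠ i ∧ k ≠ i - 1 then u i else 0) with hc
  rw [← ((toda_diff n) (X, u)).lineDeriv_eq_fderiv]
  have hpt : ∀ t : ℝ, (X, u) + t • ((Pi.single k 1 : Fin n → ℝ), (0 : Fin n → ℝ))
      = (X + t • (Pi.single k 1 : Fin n → ℝ), u) := by
    intro t
    simp [Prod.ext_iff]
  have key : ∀ t : ℝ, todaPeriodicI3 n (X + t • (Pi.single k 1 : Fin n → ℝ), u)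
      = todaPeriodicI3 n (X, u) - t * c := by
    intro t
    simp only [todaPeriodicI3]
    have hB : ∀ i : Fin n,
        (∑ j : Fin n, if j ≠ i ∧ j ≠ i - 1
            then u i * ((X + t • (Pi.single k 1 : Fin n → ℝ)) j) else 0)
        = (∑ j : Fin n, if j ≠ i ∧ j ≠ i - 1 then u i * X j else 0)
          + (if k ≠ i ∧ k ≠ i - 1 then t * u i else 0) := by
      intro i
      have hterm : ∀ j : Fin n,
          (if j ≠ i ∧ j ≠ i - 1 then u i * ((X + t • (Pi.single k 1 : Fin n → ℝ)) j) else 0)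
          = (if j ≠ i ∧ j ≠ i - 1 then u i * X j else 0)
            + (if j = k then (if k ≠ i ∧ k ≠ i - 1 then t * u i else 0) else 0) := by
        intro j
        simp only [Pi.add_apply, Pi.smul_apply, Pi.single_apply, smul_eq_mul]
        rcases eq_or_ne j k with rfl | hjk
        · simp only [if_pos rfl]
          split_ifs <;> ring
        · simp only [if_neg hjk]
          split_ifs <;> ring
      rw [Finset.sum_congr rfl (fun j _ => hterm j), Finset.sum_add_distrib,
        Finset.sum_ite_eq' Finset.univ k, if_pos (Finset.mem_univ k)]
    rw [Finset.sum_congr rfl (fun i _ => hB i), Finset.sum_add_distrib]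
    have hpull : (∑ i : Fin n, (if k ≠ i ∧ k ≠ i - 1 then t * u i else 0)) = t * c := by
      rw [hc, Finset.mul_sum]
      exact Finset.sum_congr rfl (fun i _ => by split_ifs <;> ring)
    rw [hpull]
    ring
  have hfun : (fun t : ℝ => todaPeriodicI3 n
      ((X, u) + t • ((Pi.single k 1 : Fin n → ℝ), (0 : Fin n → ℝ))))
      = fun t : ℝ => todaPeriodicI3 n (X, u) - t * c := by
    funext t; rw [hpt t, key t]
  have hd : HasDerivAt (fun t : ℝ => todaPeriodicI3 n (X, u) - t * c) (-c) 0 := by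
    simpa using ((hasDerivAt_id (0 : ℝ)).mul_const c).const_sub (todaPeriodicI3 n (X, u))
  rw [lineDeriv, hfun, hd.deriv]

lemma toda_fderiv_u_dir (n : ℕ) [NeZero n] (X : Fin n → ℝ) (k : Fin n) :
    fderiv ℝ (todaPeriodicI3 n) (X, 0) (0, (Pi.single k 1 : Fin n → ℝ))
      = -(∑ j : Fin n, if j ≠ k ∧ j ≠ k - 1 then X j else 0) := by
  set c := ∑ j : Fin n, (if j ≠ k ∧ j ≠ k - 1 then X j else 0) with hc
  rw [← ((toda_diff n) (X, 0)).lineDeriv_eq_fderiv]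
  have hpt : ∀ t : ℝ, ((X, 0) : (Fin n → ℝ) × (Fin n → ℝ))
      + t • ((0 : Fin n → ℝ), (Pi.single k 1 : Fin n → ℝ))
      = (X, t • (Pi.single k 1 : Fin n → ℝ)) := by
    intro t; simp [Prod.ext_iff]
  have key : ∀ t : ℝ, todaPeriodicI3 n (X, t • (Pi.single k 1 : Fin n → ℝ)) = -(t * c) := by
    intro t
    simp only [todaPeriodicI3]
    have hA : (∑ s ∈ Finset.powersetCard 3 (Finset.univ : Finset (Fin n)),
        ∏ i ∈ s, (t • (Pi.single k 1 : Fin n → ℝ)) i) = 0 := by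
      apply Finset.sum_eq_zero
      intro s hs
      have hcard : s.card = 3 := (Finset.mem_powersetCard.mp hs).2
      obtain ⟨i, his, hik⟩ := Finset.exists_mem_ne (show 1 < s.card by omega) k
      exact Finset.prod_eq_zero his (by simp [Pi.single_eq_of_ne hik])
    have hB : ∀ i : Fin n,
        (∑ j : Fin n, if j ≠ i ∧ j ≠ i - 1
            then (t • (Pi.single k 1 : Fin n → ℝ)) i * X j else 0)
        = if i = k then (∑ j : Fin n, if j ≠ k ∧ j ≠ k - 1 then t * X j else 0) else 0 := by
      intro i
      rcases eq_or_ne i k with rfl | hik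
      · simp [Pi.single_eq_same]
      · simp [Pi.single_eq_of_ne hik, hik]
    rw [hA, Finset.sum_congr rfl (fun i _ => hB i),
      Finset.sum_ite_eq' Finset.univ k, if_pos (Finset.mem_univ k)]
    have hpull : (∑ j : Fin n, (if j ≠ k ∧ j ≠ k - 1 then t * X j else 0)) = t * c := by
      rw [hc, Finset.mul_sum]
      exact Finset.sum_congr rfl (fun j _ => by split_ifs <;> ring)
    rw [hpull]
    ring
  have hfun : (fun t : ℝ => todaPeriodicI3 n
      (((X, 0) : (Fin n → ℝ) × (Fin n → ℝ))
        + t • ((0 : Fin n → ℝ), (Pi.single k 1 : Fin n → ℝ))))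
      = fun t : ℝ => -(t * c) := by
    funext t; rw [hpt t, key t]
  have hd : HasDerivAt (fun t : ℝ => -(t * c)) (-c) 0 := by
    simpa using ((hasDerivAt_id (0 : ℝ)).mul_const c).fun_neg
  rw [lineDeriv, hfun, hd.deriv]

lemma toda_fderiv_at_zero (n : ℕ) [NeZero n] :
    fderiv ℝ (todaPeriodicI3 n) (0, 0) = 0 := by
  apply ContinuousLinearMap.ext
  rintro ⟨a, b⟩
  rw [← ((toda_diff n) (0, 0)).lineDeriv_eq_fderiv]
  set A := ∑ s ∈ Finset.powersetCard 3 (Finset.univ : Finset (Fin n)), ∏ i ∈ s, b i with hA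
  set B := ∑ i : Fin n, ∑ j : Fin n, (if j ≠ i ∧ j ≠ i - 1 then b i * a j else 0) with hB
  have key : ∀ t : ℝ, todaPeriodicI3 n (((0, 0) : (Fin n → ℝ) × (Fin n → ℝ)) + t • (a, b))
      = t ^ 3 * A - t ^ 2 * B := by
    intro t
    have hpt : (((0, 0) : (Fin n → ℝ) × (Fin n → ℝ)) + t • (a, b)) = (t • a, t • b) := by
      simp [Prod.ext_iff]
    rw [hpt]
    simp only [todaPeriodicI3]
    have h1 : (∑ s ∈ Finset.powersetCard 3 (Finset.univ : Finset (Fin n)),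
        ∏ i ∈ s, (t • b) i) = t ^ 3 * A := by
      rw [hA, Finset.mul_sum]
      apply Finset.sum_congr rfl
      intro s hs
      have hcard : s.card = 3 := (Finset.mem_powersetCard.mp hs).2
      simp only [Pi.smul_apply, smul_eq_mul]
      rw [Finset.prod_mul_distrib, Finset.prod_const, hcard]
    have h2 : (∑ i : Fin n, ∑ j : Fin n,
        (if j ≠ i ∧ j ≠ i - 1 then (t • b) i * (t • a) j else 0)) = t ^ 2 * B := by
      rw [hB, Finset.mul_sum]
      apply Finset.sum_congr rfl
      intro i _
      rw [Finset.mul_sum]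
      apply Finset.sum_congr rfl
      intro j _
      simp only [Pi.smul_apply, smul_eq_mul]
      split_ifs <;> ring
    rw [h1, h2]
  have hfun : (fun t : ℝ => todaPeriodicI3 n
      (((0, 0) : (Fin n → ℝ) × (Fin n → ℝ)) + t • (a, b)))
      = fun t : ℝ => t ^ 3 * A - t ^ 2 * B := funext key
  have hd : HasDerivAt (fun t : ℝ => t ^ 3 * A - t ^ 2 * B)
      (3 * 0 ^ 2 * A - 2 * 0 ^ 1 * B) 0 := by
    exact (((hasDerivAt_pow 3 (0 : ℝ)).mul_const A).sub
      ((hasDerivAt_pow 2 (0 : ℝ)).mul_const B)).congr_deriv (by push_cast; ring)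
  rw [lineDeriv, hfun, hd.deriv]
  simp

/-- For the periodic Toda lattice with an odd number `n ≥ 3` of particles, the
gradient of `I₃` vanishes exactly at the origin. -/
theorem todaPeriodic_I3_gradient_zero_iff_odd
    (n : ℕ) [NeZero n] (hn : 3 ≤ n) (hodd : Odd n) (X u : Fin n → ℝ) :
    fderiv ℝ (todaPeriodicI3 n) (X, u) = 0 ↔ (X = 0 ∧ u = 0) := by
  have h1 : (1 : Fin n) ≠ 0 := toda_fin_one_ne_zero n hn
  constructor
  · intro h
    have hu : u = 0 := by
      apply toda_key_alt n hn hodd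
      intro k
      have hkne : k ≠ k + 1 := fun hh => h1 (left_eq_add.mp hh)
      have hk := toda_fderiv_X_dir n X u k
      rw [h, ContinuousLinearMap.zero_apply] at hk
      have hconv : (∑ i : Fin n, if i ≠ k ∧ i ≠ k + 1 then u i else 0)
          = ∑ i : Fin n, if k ≠ i ∧ k ≠ i - 1 then u i else 0 := by
        apply Finset.sum_congr rfl
        intro i _
        apply if_congr _ rfl rfl
        apply and_congr
        · exact ne_comm
        · constructor
          · intro hne heq
            exact hne (by rw [heq]; ring)
          · intro hne heq
            exact hne (by rw [heq]; ring)
      have hsum : (∑ i : Fin n, if i ≠ k ∧ i ≠ k + 1 then u i else 0) = 0 := by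
        rw [hconv]; linarith
      rw [toda_sum_ite_two n u k (k + 1) hkne] at hsum
      linarith
    subst hu
    refine ⟨?_, rfl⟩
    have ha : (fun k : Fin n => X (k - 1)) = 0 := by
      apply toda_key_alt n hn hodd
      intro k
      have hkm : k ≠ k - 1 := by
        intro hh
        have h2 : k + 1 = k := eq_sub_iff_add_eq.mp hh
        exact h1 (by simpa using add_left_cancel (show k + 1 = k + 0 by simpa using h2))
      have hk := toda_fderiv_u_dir n X k
      rw [h, ContinuousLinearMap.zero_apply] at hk
      have hsum : (∑ j : Fin n, if j ≠ k ∧ j ≠ k - 1 then X j else 0) = 0 := by linarith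
      rw [toda_sum_ite_two n X k (k - 1) hkm] at hsum
      have e1 : k + 1 - 1 = k := by ring
      have e2 : (∑ i : Fin n, X (i - 1)) = ∑ i : Fin n, X i :=
        Fintype.sum_equiv (Equiv.subRight (1 : Fin n)) _ _ (fun i => rfl)
      simp only [e1]
      rw [e2]
      linarith
    funext k
    have hk1 := congrFun ha (k + 1)
    have e1 : k + 1 - 1 = k := by ring
    rw [e1] at hk1
    exact hk1
  · rintro ⟨rfl, rfl⟩
    exact toda_fderiv_at_zero n
end

section
/- Let n ≥ 4 be even. On ℝ²ⁿ with coordinates (X₁,...,Xₙ,u₁,...,uₙ) define I₃ = Σ_{1 ≤ i₁ < i₂ < i₃ ≤ n} u_{i₁} u_{i₂} u_{i₃} − Σ_{1 ≤ i,j ≤ n, j ≢ i (mod n), j ≢ i−1 (mod n)} u_i X_j, where X₀ := Xₙ. Then ∇I₃(X,u) = 0 if and only if there exist X₁, X₂, u₁, u₂ ∈ ℝ with u₁ + u₂ = 0 and X₁ + X₂ = u₁u₂ such that X_i = X₁ for all odd i, X_i = X₂ for all even i, u_i = u₁ for all odd i, and u_i = u₂ for all even i. -/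
section TodaAux
open Finset

variable {n : ℕ} [NeZero n]


noncomputable def tP1 (n : ℕ) (j : Fin n) : ((Fin n → ℝ) × (Fin n → ℝ)) →L[ℝ] ℝ :=
  (ContinuousLinearMap.proj j).comp (ContinuousLinearMap.fst ℝ (Fin n → ℝ) (Fin n → ℝ))

noncomputable def tP2 (n : ℕ) (j : Fin n) : ((Fin n → ℝ) × (Fin n → ℝ)) →L[ℝ] ℝ :=
  (ContinuousLinearMap.proj j).comp (ContinuousLinearMap.snd ℝ (Fin n → ℝ) (Fin n → ℝ))

lemma tP1_apply (j : Fin n) (q : (Fin n → ℝ) × (Fin n → ℝ)) : tP1 n j q = q.1 j := rfl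
lemma tP2_apply (j : Fin n) (q : (Fin n → ℝ) × (Fin n → ℝ)) : tP2 n j q = q.2 j := rfl

lemma hP1 (j : Fin n) (p : (Fin n → ℝ) × (Fin n → ℝ)) :
    HasFDerivAt (fun q : (Fin n → ℝ) × (Fin n → ℝ) => q.1 j) (tP1 n j) p :=
  (tP1 n j).hasFDerivAt

lemma hP2 (j : Fin n) (p : (Fin n → ℝ) × (Fin n → ℝ)) :
    HasFDerivAt (fun q : (Fin n → ℝ) × (Fin n → ℝ) => q.2 j) (tP2 n j) p :=
  (tP2 n j).hasFDerivAt

lemma hprod (s : Finset (Fin n)) (p : (Fin n → ℝ) × (Fin n → ℝ)) :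
    HasFDerivAt (fun q : (Fin n → ℝ) × (Fin n → ℝ) => ∏ i ∈ s, q.2 i)
      (∑ i ∈ s, (∏ j ∈ s.erase i, p.2 j) • tP2 n i) p :=
  HasFDerivAt.finset_prod fun i _ => hP2 i p

lemma hmul (i j : Fin n) (p : (Fin n → ℝ) × (Fin n → ℝ)) :
    HasFDerivAt (fun q : (Fin n → ℝ) × (Fin n → ℝ) => q.2 i * q.1 j)
      (p.2 i • tP1 n j + p.1 j • tP2 n i) p :=
  (hP2 i p).mul (hP1 j p)

noncomputable def tDer (n : ℕ) [NeZero n] (X u : Fin n → ℝ) :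
    ((Fin n → ℝ) × (Fin n → ℝ)) →L[ℝ] ℝ :=
  (∑ s ∈ Finset.powersetCard 3 (Finset.univ : Finset (Fin n)),
      ∑ i ∈ s, (∏ j ∈ s.erase i, u j) • tP2 n i)
    - ∑ i : Fin n, ∑ j : Fin n,
        if j ≠ i ∧ j ≠ i - 1 then u i • tP1 n j + X j • tP2 n i else 0

lemma hasFDerivAt_I3 (X u : Fin n → ℝ) :
    HasFDerivAt (todaPeriodicI3 n) (tDer n X u) (X, u) := by
  have h1 : HasFDerivAt
      (fun p : (Fin n → ℝ) × (Fin n → ℝ) =>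
        ∑ s ∈ Finset.powersetCard 3 (Finset.univ : Finset (Fin n)), ∏ i ∈ s, p.2 i)
      (∑ s ∈ Finset.powersetCard 3 (Finset.univ : Finset (Fin n)),
        ∑ i ∈ s, (∏ j ∈ s.erase i, u j) • tP2 n i) (X, u) :=
    HasFDerivAt.fun_sum fun s _ => hprod s (X, u)
  have h2 : HasFDerivAt
      (fun p : (Fin n → ℝ) × (Fin n → ℝ) =>
        ∑ i : Fin n, ∑ j : Fin n, if j ≠ i ∧ j ≠ i - 1 then p.2 i * p.1 j else 0)
      (∑ i : Fin n, ∑ j : Fin n,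
        if j ≠ i ∧ j ≠ i - 1 then u i • tP1 n j + X j • tP2 n i else 0) (X, u) := by
    apply HasFDerivAt.fun_sum; intro i _
    apply HasFDerivAt.fun_sum; intro j _
    by_cases h : j ≠ i ∧ j ≠ i - 1
    · simpa only [if_pos h] using hmul i j (X, u)
    · simpa only [if_neg h] using hasFDerivAt_const (0 : ℝ) ((X, u) : (Fin n → ℝ) × (Fin n → ℝ))
  exact h1.sub h2


noncomputable def coA (u : Fin n → ℝ) (k : Fin n) : ℝ :=
  ∑ i : Fin n, if k ≠ i ∧ k ≠ i - 1 then u i else 0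

noncomputable def coB1 (u : Fin n → ℝ) (k : Fin n) : ℝ :=
  ∑ t ∈ ((Finset.univ : Finset (Fin n)).erase k).powersetCard 2, ∏ i ∈ t, u i

noncomputable def coB2 (X : Fin n → ℝ) (k : Fin n) : ℝ :=
  ∑ j : Fin n, if j ≠ k ∧ j ≠ k - 1 then X j else 0

lemma esymm2 (T : Finset (Fin n)) (u : Fin n → ℝ) :
    ∑ t ∈ T.powersetCard 2, ∏ i ∈ t, u i
      = ((∑ i ∈ T, u i) ^ 2 - ∑ i ∈ T, (u i) ^ 2) / 2 := by
  classical
  induction T using Finset.induction_on with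
  | empty => rw [powersetCard_eq_empty.2 (by simp)]; simp
  | @insert a s ha ih =>
      rw [show (2:ℕ) = Nat.succ 1 from rfl, powersetCard_succ_insert ha]
      rw [sum_union]
      · have himg : ∑ t ∈ (s.powersetCard 1).image (insert a), ∏ i ∈ t, u i
            = u a * ∑ i ∈ s, u i := by
          rw [sum_image]
          · rw [powersetCard_one, sum_map, mul_sum]
            apply sum_congr rfl
            intro i hi
            have hais : a ∉ ({i} : Finset (Fin n)) := by
              simp only [mem_singleton]
              rintro rfl; exact ha hi
            simp [prod_insert hais]
          · intro t1 h1 t2 h2 he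
            have ha1 : a ∉ t1 := fun h => ha ((mem_powersetCard.1 h1).1 h)
            have ha2 : a ∉ t2 := fun h => ha ((mem_powersetCard.1 h2).1 h)
            rw [← erase_insert ha1, ← erase_insert ha2, he]
        rw [himg, ih, sum_insert ha, sum_insert ha]
        ring
      · rw [disjoint_left]
        intro t ht ht'
        have h1 : a ∉ t := fun h => ha ((mem_powersetCard.1 ht).1 h)
        obtain ⟨t', _, rfl⟩ := mem_image.1 ht'
        exact h1 (mem_insert_self a t')

lemma coB1_eq (u : Fin n → ℝ) (k : Fin n) :
    ∑ s ∈ Finset.powersetCard 3 (Finset.univ : Finset (Fin n)),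
        (if k ∈ s then ∏ i ∈ s.erase k, u i else 0)
      = coB1 u k := by
  classical
  simp only [coB1]
  conv_lhs => rw [show (Finset.univ : Finset (Fin n)) = insert k (Finset.univ.erase k) from
    (insert_erase (mem_univ k)).symm]
  rw [show (3:ℕ) = Nat.succ 2 from rfl, powersetCard_succ_insert (notMem_erase k _)]
  rw [sum_union]
  · have h1 : ∑ s ∈ (Finset.univ.erase k).powersetCard 3,
        (if k ∈ s then ∏ i ∈ s.erase k, u i else 0) = 0 := by
      apply sum_eq_zero
      intro s hs
      have : k ∉ s := fun h => (notMem_erase k _) ((mem_powersetCard.1 hs).1 h)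
      simp [this]
    rw [h1, zero_add, sum_image]
    · apply sum_congr rfl
      intro t ht
      have hkt : k ∉ t := fun h => (notMem_erase k _) ((mem_powersetCard.1 ht).1 h)
      rw [if_pos (mem_insert_self k t), erase_insert hkt]
    · intro t1 h1 t2 h2 he
      have ha1 : k ∉ t1 := fun h => (notMem_erase k _) ((mem_powersetCard.1 h1).1 h)
      have ha2 : k ∉ t2 := fun h => (notMem_erase k _) ((mem_powersetCard.1 h2).1 h)
      rw [← erase_insert ha1, ← erase_insert ha2, he]
  · rw [disjoint_left]
    intro t ht ht'
    have h1 : k ∉ t := fun h => (notMem_erase k _) ((mem_powersetCard.1 ht).1 h)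
    obtain ⟨t', _, rfl⟩ := mem_image.1 ht'
    exact h1 (mem_insert_self k t')

lemma tDer_apply (X u v w : Fin n → ℝ) :
    tDer n X u (v, w)
      = (∑ k, coB1 u k * w k) - ((∑ k, coA u k * v k) + ∑ k, coB2 X k * w k) := by
  have happ : tDer n X u (v, w)
      = (∑ s ∈ Finset.powersetCard 3 (Finset.univ : Finset (Fin n)),
          ∑ i ∈ s, (∏ j ∈ s.erase i, u j) * w i)
        - ∑ i : Fin n, ∑ j : Fin n,
            (if j ≠ i ∧ j ≠ i - 1 then u i * v j + X j * w i else 0) := by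
    simp only [tDer, ContinuousLinearMap.sub_apply, ContinuousLinearMap.sum_apply,
      ContinuousLinearMap.smul_apply, ContinuousLinearMap.add_apply,
      apply_ite (fun L : ((Fin n → ℝ) × (Fin n → ℝ)) →L[ℝ] ℝ => L (v, w)),
      ContinuousLinearMap.zero_apply, tP1_apply, tP2_apply, smul_eq_mul]
  rw [happ]
  have e1 : (∑ s ∈ Finset.powersetCard 3 (Finset.univ : Finset (Fin n)),
        ∑ i ∈ s, (∏ j ∈ s.erase i, u j) * w i) = ∑ k, coB1 u k * w k := by
    calc ∑ s ∈ Finset.powersetCard 3 (Finset.univ : Finset (Fin n)),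
          ∑ i ∈ s, (∏ j ∈ s.erase i, u j) * w i
        = ∑ s ∈ Finset.powersetCard 3 (Finset.univ : Finset (Fin n)),
            ∑ i : Fin n, (if i ∈ s then (∏ j ∈ s.erase i, u j) * w i else 0) := by
          refine Finset.sum_congr rfl fun s _ => ?_
          rw [Finset.sum_ite_mem, univ_inter]
      _ = ∑ i : Fin n, ∑ s ∈ Finset.powersetCard 3 (Finset.univ : Finset (Fin n)),
            (if i ∈ s then (∏ j ∈ s.erase i, u j) * w i else 0) := Finset.sum_comm
      _ = ∑ k, coB1 u k * w k := by
          refine Finset.sum_congr rfl fun k _ => ?_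
          rw [← coB1_eq u k, Finset.sum_mul]
          refine Finset.sum_congr rfl fun s _ => ?_
          rw [ite_mul, zero_mul]
  have e2 : (∑ i : Fin n, ∑ j : Fin n,
        (if j ≠ i ∧ j ≠ i - 1 then u i * v j + X j * w i else 0))
      = (∑ k, coA u k * v k) + ∑ k, coB2 X k * w k := by
    have split : ∀ (c : Prop) [Decidable c] (a b : ℝ),
        (if c then a + b else 0) = (if c then a else 0) + (if c then b else 0) := by
      intros c _ a b; split <;> simp
    calc ∑ i : Fin n, ∑ j : Fin n,
          (if j ≠ i ∧ j ≠ i - 1 then u i * v j + X j * w i else 0)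
        = (∑ i : Fin n, ∑ j : Fin n, (if j ≠ i ∧ j ≠ i - 1 then u i * v j else 0))
          + ∑ i : Fin n, ∑ j : Fin n, (if j ≠ i ∧ j ≠ i - 1 then X j * w i else 0) := by
          rw [← Finset.sum_add_distrib]
          refine Finset.sum_congr rfl fun i _ => ?_
          rw [← Finset.sum_add_distrib]
          exact Finset.sum_congr rfl fun j _ => split _ _ _
      _ = (∑ k, coA u k * v k) + ∑ k, coB2 X k * w k := by
          congr 1
          · rw [Finset.sum_comm]
            refine Finset.sum_congr rfl fun k _ => ?_
            rw [coA, Finset.sum_mul]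
            refine Finset.sum_congr rfl fun i _ => ?_
            rw [ite_mul, zero_mul]
          · refine Finset.sum_congr rfl fun k _ => ?_
            rw [coB2, Finset.sum_mul]
            refine Finset.sum_congr rfl fun j _ => ?_
            rw [ite_mul, zero_mul]
  rw [e1, e2]

lemma tDer_eq_zero_iff (X u : Fin n → ℝ) :
    tDer n X u = 0 ↔ (∀ k, coA u k = 0) ∧ ∀ k, coB1 u k = coB2 X k := by
  constructor
  · intro h
    constructor
    · intro k
      have h1 : tDer n X u (Pi.single k 1, 0) = 0 := by rw [h]; rfl
      rw [tDer_apply] at h1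
      simpa [Pi.single_apply, mul_ite] using h1
    · intro k
      have h1 : tDer n X u (0, Pi.single k 1) = 0 := by rw [h]; rfl
      rw [tDer_apply] at h1
      refine sub_eq_zero.1 ?_
      simpa [Pi.single_apply, mul_ite] using h1
  · rintro ⟨h1, h2⟩
    refine ContinuousLinearMap.ext fun q => ?_
    obtain ⟨v, w⟩ := q
    rw [ContinuousLinearMap.zero_apply, tDer_apply]
    simp [h1, h2]

lemma fin_add_one_ne (hn : 2 ≤ n) (k : Fin n) : k + 1 ≠ k := by
  intro h
  have hv := congrArg Fin.val h
  rw [Fin.val_add] at hv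
  have h1 : (1 : Fin n).val = 1 := by
    rw [Fin.val_one']
    exact Nat.mod_eq_of_lt (by omega)
  rw [h1] at hv
  rcases Nat.lt_or_ge (k.val + 1) n with h2 | h2
  · rw [Nat.mod_eq_of_lt h2] at hv; omega
  · have h3 : k.val + 1 = n := by have := k.isLt; omega
    rw [h3, Nat.mod_self] at hv
    have := k.isLt; omega

lemma coA_eq (hn : 2 ≤ n) (u : Fin n → ℝ) (k : Fin n) :
    coA u k = (∑ i, u i) - (u k + u (k + 1)) := by
  have hcond : ∀ i : Fin n, (k ≠ i ∧ k ≠ i - 1) ↔ i ∉ ({k, k + 1} : Finset (Fin n)) := by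
    intro i
    simp only [mem_insert, mem_singleton, not_or]
    constructor
    · rintro ⟨h1, h2⟩
      refine ⟨fun h => h1 h.symm, fun h => h2 ?_⟩
      rw [h]; rw [add_sub_cancel_right]
    · rintro ⟨h1, h2⟩
      refine ⟨fun h => h1 h.symm, fun h => h2 ?_⟩
      rw [h]; rw [sub_add_cancel]
  have : coA u k = ∑ i ∈ Finset.univ \ ({k, k + 1} : Finset (Fin n)), u i := by
    rw [coA, Finset.sdiff_eq_filter, Finset.sum_filter]
    exact Finset.sum_congr rfl fun i _ => by rw [if_congr (hcond i) rfl rfl]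
  rw [this, Finset.sum_sdiff_eq_sub (Finset.subset_univ _),
    Finset.sum_pair (Ne.symm (fin_add_one_ne hn k))]

lemma coB2_eq (hn : 2 ≤ n) (X : Fin n → ℝ) (k : Fin n) :
    coB2 X k = (∑ i, X i) - (X k + X (k - 1)) := by
  have hne : k ≠ k - 1 := by
    have := fin_add_one_ne hn (k - 1)
    rw [sub_add_cancel] at this
    exact this
  have hcond : ∀ j : Fin n, (j ≠ k ∧ j ≠ k - 1) ↔ j ∉ ({k, k - 1} : Finset (Fin n)) := by
    intro j
    simp only [mem_insert, mem_singleton, not_or]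
  have : coB2 X k = ∑ j ∈ Finset.univ \ ({k, k - 1} : Finset (Fin n)), X j := by
    rw [coB2, Finset.sdiff_eq_filter, Finset.sum_filter]
    exact Finset.sum_congr rfl fun j _ => by rw [if_congr (hcond j) rfl rfl]
  rw [this, Finset.sum_sdiff_eq_sub (Finset.subset_univ _), Finset.sum_pair hne]

lemma coB1_val (u : Fin n → ℝ) (k : Fin n) :
    coB1 u k = (((∑ i, u i) - u k) ^ 2 - ((∑ i, (u i) ^ 2) - (u k) ^ 2)) / 2 := by
  rw [coB1, esymm2, Finset.sum_erase_eq_sub (mem_univ k),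
    Finset.sum_erase_eq_sub (mem_univ k)]


lemma tval_one (hn : 2 ≤ n) : (1 : Fin n).val = 1 := by
  rw [Fin.val_one']; exact Nat.mod_eq_of_lt (by omega)

lemma parity_succ (hn : 2 ≤ n) (heven : Even n) (k : Fin n) :
    ((k + 1 : Fin n)).val % 2 = (k.val + 1) % 2 := by
  rw [Fin.val_add, tval_one hn]
  exact Nat.mod_mod_of_dvd _ (even_iff_two_dvd.1 heven)

lemma parity_pred (hn : 2 ≤ n) (heven : Even n) (k : Fin n) :
    k.val % 2 = (((k - 1 : Fin n)).val + 1) % 2 := by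
  have := parity_succ hn heven (k - 1)
  rw [sub_add_cancel] at this
  exact this

lemma alt_vals (hn : 2 ≤ n) (f : Fin n → ℝ)
    (h : ∀ k : Fin n, f (k + 1) = f 0 + f 1 - f k) :
    ∀ i : Fin n, f i = if i.val % 2 = 0 then f 0 else f 1 := by
  have key : ∀ m : ℕ, ∀ hm : m < n, f ⟨m, hm⟩ = if m % 2 = 0 then f 0 else f 1 := by
    intro m
    induction m with
    | zero =>
        intro hm
        have : (⟨0, hm⟩ : Fin n) = 0 := Fin.ext (by simp)
        simp [this]
    | succ m ih =>
        intro hm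
        have hm' : m < n := by omega
        have hstep : (⟨m, hm'⟩ : Fin n) + 1 = ⟨m + 1, hm⟩ := by
          apply Fin.ext
          rw [Fin.val_add, tval_one hn]
          exact Nat.mod_eq_of_lt hm
        have hrec := h ⟨m, hm'⟩
        rw [hstep] at hrec
        rw [hrec, ih hm']
        by_cases hp : m % 2 = 0
        · rw [if_pos hp, if_neg (by omega)]; ring
        · rw [if_neg hp, if_pos (by omega)]; ring
  intro i
  have := key i.val i.isLt
  simpa using this

lemma sum_alt_range (m : ℕ) (a b : ℝ) :
    ∑ i ∈ Finset.range (2 * m), (if i % 2 = 0 then a else b) = m * (a + b) := by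
  induction m with
  | zero => simp
  | succ m ih =>
      rw [show 2 * (m + 1) = (2 * m) + 1 + 1 by ring, Finset.sum_range_succ,
        Finset.sum_range_succ, ih]
      rw [if_pos (by omega), if_neg (by omega)]
      push_cast; ring

lemma sum_alt_fin (m : ℕ) (hm : n = 2 * m) (a b : ℝ) :
    ∑ i : Fin n, (if i.val % 2 = 0 then a else b) = m * (a + b) := by
  rw [Fin.sum_univ_eq_sum_range (fun j => if j % 2 = 0 then a else b), hm]
  exact sum_alt_range m a b

lemma crit_iff (hn : 4 ≤ n) (heven : Even n) (X u : Fin n → ℝ) :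
    ((∀ k, coA u k = 0) ∧ ∀ k, coB1 u k = coB2 X k) ↔
      ∃ X₁ X₂ u₁ u₂ : ℝ, u₁ + u₂ = 0 ∧ X₁ + X₂ = u₁ * u₂ ∧
        (∀ i : Fin n, X i = if i.val % 2 = 0 then X₁ else X₂) ∧
        (∀ i : Fin n, u i = if i.val % 2 = 0 then u₁ else u₂) := by
  obtain ⟨m, hm⟩ := id heven
  have hm' : n = 2 * m := by omega
  have h2n : 2 ≤ n := by omega
  have hm2 : 2 ≤ m := by omega
  have hmR : (2:ℝ) ≤ (m:ℝ) := by exact_mod_cast hm2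
  have hm1 : ((m:ℝ) - 1) ≠ 0 := by linarith
  have hnR : (n:ℝ) = 2 * m := by exact_mod_cast hm'
  constructor
  · rintro ⟨hA, hB⟩
    have hA' : ∀ k, u k + u (k + 1) = ∑ i, u i := by
      intro k
      have h := hA k
      rw [coA_eq h2n] at h
      linarith
    have h0 : u 0 + u 1 = ∑ i, u i := by
      have := hA' 0
      rwa [zero_add] at this
    have hrec : ∀ k : Fin n, u (k + 1) = u 0 + u 1 - u k := by
      intro k
      have := hA' k
      linarith
    have hu_alt := alt_vals h2n u hrec
    have hU : ∑ i, u i = m * (u 0 + u 1) := by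
      rw [Finset.sum_congr rfl fun i _ => hu_alt i]
      exact sum_alt_fin m hm' _ _
    have hsum01 : u 0 + u 1 = 0 := by
      have hc : u 0 + u 1 = (m:ℝ) * (u 0 + u 1) := h0.trans hU
      have hz : ((m:ℝ) - 1) * (u 0 + u 1) = 0 := by linear_combination -hc
      rcases mul_eq_zero.1 hz with h | h
      · exact absurd h hm1
      · exact h
    have hU0 : ∑ i, u i = 0 := by rw [hU, hsum01, mul_zero]
    have hu1 : u 1 = - u 0 := by linarith
    have hSq : ∀ k, (u k) ^ 2 = (u 0) ^ 2 := by
      intro k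
      rw [hu_alt k]
      split
      · rfl
      · rw [hu1]; ring
    have hS2 : ∑ i, (u i) ^ 2 = (n:ℝ) * (u 0) ^ 2 := by
      rw [Finset.sum_congr rfl fun i _ => hSq i, Finset.sum_const, card_univ,
        Fintype.card_fin, nsmul_eq_mul]
    have hXpair : ∀ k : Fin n,
        X k + X (k - 1) = (∑ i, X i) - ((1:ℝ) - m) * (u 0) ^ 2 := by
      intro k
      have h := hB k
      rw [coB1_val, coB2_eq h2n, hU0, hS2] at h
      have hs : (0 - u k) ^ 2 = (u 0) ^ 2 := by rw [zero_sub, neg_sq, hSq k]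
      rw [hs, hSq k, hnR] at h
      linarith
    have hXrec : ∀ k : Fin n, X (k + 1) = X 0 + X 1 - X k := by
      intro k
      have h1 := hXpair (k + 1)
      rw [add_sub_cancel_right] at h1
      have h2 := hXpair 1
      rw [sub_self] at h2
      linarith
    have hX_alt := alt_vals h2n X hXrec
    have hY : ∑ i, X i = m * (X 0 + X 1) := by
      rw [Finset.sum_congr rfl fun i _ => hX_alt i]
      exact sum_alt_fin m hm' _ _
    have hX01 : X 0 + X 1 = u 0 * u 1 := by
      have h2 := hXpair 1
      rw [sub_self, hY] at h2
      have hz : ((m:ℝ) - 1) * (X 0 + X 1 + (u 0) ^ 2) = 0 := by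
        linear_combination -h2
      rcases mul_eq_zero.1 hz with h | h
      · exact absurd h hm1
      · rw [hu1]; linear_combination h
    exact ⟨X 0, X 1, u 0, u 1, hsum01, hX01, hX_alt, hu_alt⟩
  · rintro ⟨X₁, X₂, u₁, u₂, hu12, hX12, hXe, hue⟩
    have hu2 : u₂ = -u₁ := by linarith
    have hU0 : ∑ i, u i = 0 := by
      rw [Finset.sum_congr rfl fun i _ => hue i, sum_alt_fin m hm', hu12, mul_zero]
    have hY : ∑ i, X i = m * (X₁ + X₂) := by
      rw [Finset.sum_congr rfl fun i _ => hXe i]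
      exact sum_alt_fin m hm' _ _
    have hSq : ∀ k, (u k) ^ 2 = u₁ ^ 2 := by
      intro k
      rw [hue k]
      split
      · rfl
      · rw [hu2]; ring
    have hS2 : ∑ i, (u i) ^ 2 = (n:ℝ) * u₁ ^ 2 := by
      rw [Finset.sum_congr rfl fun i _ => hSq i, Finset.sum_const, card_univ,
        Fintype.card_fin, nsmul_eq_mul]
    have hadj : ∀ k : Fin n, u k + u (k + 1) = u₁ + u₂ := by
      intro k
      rw [hue k, hue (k + 1), parity_succ h2n heven k]
      rcases Nat.mod_two_eq_zero_or_one k.val with h | h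
      · rw [if_pos h, if_neg (by omega)]
      · rw [if_neg (by omega), if_pos (by omega)]; ring
    have hXadj : ∀ k : Fin n, X k + X (k - 1) = X₁ + X₂ := by
      intro k
      rw [hXe k, hXe (k - 1)]
      have hp := parity_pred h2n heven k
      rcases Nat.mod_two_eq_zero_or_one (k - 1 : Fin n).val with h | h
      · rw [if_neg (by omega), if_pos h]; ring
      · rw [if_pos (by omega), if_neg (by omega)]
    refine ⟨fun k => ?_, fun k => ?_⟩
    · rw [coA_eq h2n, hU0, hadj k, hu12]; ring
    · rw [coB1_val, coB2_eq h2n, hU0, hS2, hY, hXadj k]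
      rw [zero_sub, neg_sq, hSq k, hnR, hX12, hu2]
      ring

end TodaAux

/-- For the periodic Toda lattice with an even number `n ≥ 4` of particles, the
gradient of `I₃` vanishes exactly at the alternating configurations
`(X₁,X₂,…,X₁,X₂,u₁,u₂,…,u₁,u₂)` with `u₁ + u₂ = 0` and `X₁ + X₂ = u₁u₂`.
(Indices are numbered from `0`, so `i.val % 2 = 0` corresponds to the odd
positions `1, 3, …` in the 1-indexed formulation.) -/
theorem todaPeriodic_I3_gradient_zero_iff_even
    (n : ℕ) [NeZero n] (hn : 4 ≤ n) (heven : Even n) (X u : Fin n → ℝ) :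
    fderiv ℝ (todaPeriodicI3 n) (X, u) = 0 ↔
      ∃ X₁ X₂ u₁ u₂ : ℝ, u₁ + u₂ = 0 ∧ X₁ + X₂ = u₁ * u₂ ∧
        (∀ i : Fin n, X i = if i.val % 2 = 0 then X₁ else X₂) ∧
        (∀ i : Fin n, u i = if i.val % 2 = 0 then u₁ else u₂) := by
  rw [(hasFDerivAt_I3 X u).fderiv, tDer_eq_zero_iff]
  exact crit_iff hn heven X u
end

section
/- Let n ≥ 4 be even. On ℝ²ⁿ with coordinates (X₁,...,Xₙ,u₁,...,uₙ) define I₁ = Σ_{i=1}^n u_i and I₃ = Σ_{1 ≤ i₁ < i₂ < i₃ ≤ n} u_{i₁} u_{i₂} u_{i₃} − Σ_{1 ≤ i,j ≤ n, j ≢ i (mod n), j ≢ i−1 (mod n)} u_i X_j (X₀ := Xₙ), and let 𝕀₁₃ = (I₁, I₃) : ℝ²ⁿ → ℝ². Then rank ∇𝕀₁₃(X,u) ≤ 1 if and only if there exist X₁, X₂, u₁, u₂ ∈ ℝ with u₁ + u₂ = 0 such that X_i = X₁ for all odd i, X_i = X₂ for all even i, u_i = u₁ for all odd i, and u_i = u₂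 for all even i. (Since ∇I₁ never vanishes, this set equals M₍₁₎^{𝕀₁₃}, the set where rank ∇𝕀₁₃ = 1.) -/
/-- The conserved quantity `I₁` of the periodic Toda lattice. -/
noncomputable def todaPeriodicI1 (n : ℕ) (p : (Fin n → ℝ) × (Fin n → ℝ)) : ℝ :=
  ∑ i : Fin n, p.2 i

/-- The vectorial conserved quantity `𝕀₁₃ = (I₁, I₃)`. -/
noncomputable def todaPeriodicI13 (n : ℕ) [NeZero n]
    (p : (Fin n → ℝ) × (Fin n → ℝ)) : ℝ × ℝ :=
  (todaPeriodicI1 n p, todaPeriodicI3 n p)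

theorem toda_esymm23 {ι : Type*} [DecidableEq ι] (t : Finset ι) (f : ι → ℝ) :
    (2 * ∑ s ∈ t.powersetCard 2, ∏ i ∈ s, f i
        = (∑ i ∈ t, f i) ^ 2 - ∑ i ∈ t, f i ^ 2) ∧
    (6 * ∑ s ∈ t.powersetCard 3, ∏ i ∈ s, f i
        = (∑ i ∈ t, f i) ^ 3 - 3 * (∑ i ∈ t, f i) * (∑ i ∈ t, f i ^ 2)
          + 2 * ∑ i ∈ t, f i ^ 3) := by
  classical
  induction t using Finset.induction_on with
  | empty =>
    rw [show (∅ : Finset ι).powersetCard 2 = ∅ from Finset.powersetCard_eq_empty.mpr (by simp),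
        show (∅ : Finset ι).powersetCard 3 = ∅ from Finset.powersetCard_eq_empty.mpr (by simp)]
    simp
  | @insert a s ha ih =>
    have h1 : ∑ u ∈ s.powersetCard 1, ∏ i ∈ u, f i = ∑ i ∈ s, f i := by
      rw [Finset.powersetCard_one, Finset.sum_map]
      simp
    have hstep : ∀ k : ℕ, ∑ u ∈ (insert a s).powersetCard (k+1), ∏ i ∈ u, f i
        = (∑ u ∈ s.powersetCard (k+1), ∏ i ∈ u, f i)
          + f a * ∑ u ∈ s.powersetCard k, ∏ i ∈ u, f i := by
      intro k
      have hdisj : Disjoint (s.powersetCard (k+1)) ((s.powersetCard k).image (insert a)) := by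
        rw [Finset.disjoint_right]
        intro u hu hu'
        obtain ⟨v, hv, rfl⟩ := Finset.mem_image.mp hu
        exact ha ((Finset.mem_powersetCard.mp hu').1 (Finset.mem_insert_self a v))
      rw [Finset.powersetCard_succ_insert ha, Finset.sum_union hdisj, Finset.sum_image ?_]
      · rw [Finset.mul_sum]
        congr 1
        refine Finset.sum_congr rfl fun u hu => ?_
        have hau : a ∉ u := fun hau => ha ((Finset.mem_powersetCard.mp hu).1 hau)
        rw [Finset.prod_insert hau]
      · intro x hx y hy hxy
        have hax : a ∉ x := fun h => ha ((Finset.mem_powersetCard.mp hx).1 h)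
        have hay : a ∉ y := fun h => ha ((Finset.mem_powersetCard.mp hy).1 h)
        rw [← Finset.erase_insert hax, ← Finset.erase_insert hay, hxy]
    have h2 := hstep 1
    have h3 := hstep 2
    rw [h1] at h2
    obtain ⟨ih2, ih3⟩ := ih
    constructor
    · rw [Finset.sum_insert ha, Finset.sum_insert ha, h2]
      linear_combination ih2
    · rw [Finset.sum_insert ha, Finset.sum_insert ha, Finset.sum_insert ha, h3]
      linear_combination ih3 + 3 * f a * ih2

noncomputable def PX {n : ℕ} (j : Fin n) : ((Fin n → ℝ) × (Fin n → ℝ)) →L[ℝ] ℝ :=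
  (ContinuousLinearMap.proj j).comp (ContinuousLinearMap.fst ℝ (Fin n → ℝ) (Fin n → ℝ))

noncomputable def PU {n : ℕ} (i : Fin n) : ((Fin n → ℝ) × (Fin n → ℝ)) →L[ℝ] ℝ :=
  (ContinuousLinearMap.proj i).comp (ContinuousLinearMap.snd ℝ (Fin n → ℝ) (Fin n → ℝ))

lemma toda_sum_pair_compl {n : ℕ} [NeZero n] (a b : Fin n) (hab : a ≠ b)
    (f : Fin n → ℝ) :
    ∑ i : Fin n, (if i ≠ a ∧ i ≠ b then f i else 0) = (∑ i, f i) - f a - f b := by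
  classical
  rw [Finset.sum_ite, Finset.sum_const_zero, add_zero]
  have h1 : Finset.univ.filter (fun i : Fin n => i ≠ a ∧ i ≠ b)
      = Finset.univ \ ({a, b} : Finset (Fin n)) := by
    ext i; simp [not_or, and_comm]
  rw [h1, Finset.sum_sdiff_eq_sub (Finset.subset_univ _), Finset.sum_pair hab]
  ring

lemma fin_succ_ne {n : ℕ} [NeZero n] (hn : 2 ≤ n) (j : Fin n) : j + 1 ≠ j := by
  intro h
  have hval : ((j + 1 : Fin n)).val = (j.val + 1) % n := by
    rw [Fin.add_def]
    simp [Fin.val_one', Nat.mod_eq_of_lt (show 1 < n by omega)]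
  rw [h] at hval
  have hj := j.isLt
  rcases Nat.lt_or_ge (j.val + 1) n with h2 | h2
  · rw [Nat.mod_eq_of_lt h2] at hval; omega
  · have : j.val + 1 = n := by omega
    rw [this, Nat.mod_self] at hval; omega

lemma toda_I3_eq (n : ℕ) [NeZero n] : todaPeriodicI3 n = fun p =>
    (6 : ℝ)⁻¹ * ((∑ i, p.2 i) * (∑ i, p.2 i) * (∑ i, p.2 i)
      - 3 * ((∑ i, p.2 i) * ∑ i, p.2 i * p.2 i)
      + 2 * ∑ i, p.2 i * p.2 i * p.2 i)
      - ∑ i : Fin n, ∑ j : Fin n, if j ≠ i ∧ j ≠ i - 1 then p.2 i * p.1 j else 0 := by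
  funext p
  unfold todaPeriodicI3
  have h := (toda_esymm23 (Finset.univ : Finset (Fin n)) p.2).2
  have e2 : ∑ i : Fin n, p.2 i * p.2 i = ∑ i : Fin n, p.2 i ^ 2 :=
    Finset.sum_congr rfl fun i _ => (pow_two (p.2 i)).symm
  have e3 : ∑ i : Fin n, p.2 i * p.2 i * p.2 i = ∑ i : Fin n, p.2 i ^ 3 :=
    Finset.sum_congr rfl fun i _ => by ring
  congr 1
  rw [e2, e3]
  linear_combination h / 6

theorem toda_hasFDeriv (n : ℕ) [NeZero n] (hn : 2 ≤ n) (X u : Fin n → ℝ) :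
    ∃ D : ((Fin n → ℝ) × (Fin n → ℝ)) →L[ℝ] (ℝ × ℝ),
      HasFDerivAt (todaPeriodicI13 n) D (X, u) ∧
      (∀ v, (D v).1 = ∑ i, v.2 i) ∧
      (∀ j : Fin n, (D (Pi.single j 1, 0)).2 = -((∑ i, u i) - u j - u (j + 1))) ∧
      (∀ k : Fin n, (D (0, Pi.single k 1)).2 =
        (((∑ i, u i) ^ 2 - ∑ i, (u i) ^ 2) / 2 - (∑ i, u i) * u k + (u k) ^ 2)
          - ((∑ j, X j) - X k - X (k - 1))) := by
  classical
  have hPU : ∀ i : Fin n, HasFDerivAt (fun p : (Fin n → ℝ) × (Fin n → ℝ) => p.2 i)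
      (PU i) (X, u) := fun i => (PU i).hasFDerivAt
  have hPX : ∀ j : Fin n, HasFDerivAt (fun p : (Fin n → ℝ) × (Fin n → ℝ) => p.1 j)
      (PX j) (X, u) := fun j => (PX j).hasFDerivAt
  have hs1 : HasFDerivAt (fun p : (Fin n → ℝ) × (Fin n → ℝ) => ∑ i, p.2 i)
      (∑ i, PU i) (X, u) := HasFDerivAt.fun_sum (fun i _ => (PU i).hasFDerivAt)
  have hs2 : HasFDerivAt (fun p : (Fin n → ℝ) × (Fin n → ℝ) => ∑ i, p.2 i * p.2 i)
      (∑ i : Fin n, (u i • PU i + u i • PU i)) (X, u) :=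
    HasFDerivAt.fun_sum (fun i _ => (hPU i).mul (hPU i))
  have hs3 : HasFDerivAt (fun p : (Fin n → ℝ) × (Fin n → ℝ) => ∑ i, p.2 i * p.2 i * p.2 i)
      (∑ i : Fin n, ((u i * u i) • PU i + u i • (u i • PU i + u i • PU i))) (X, u) :=
    HasFDerivAt.fun_sum (fun i _ =>
      ((hPU i).mul (hPU i)).mul (hPU i))
  have hB : HasFDerivAt (fun p : (Fin n → ℝ) × (Fin n → ℝ) =>
      ∑ i : Fin n, ∑ j : Fin n, if j ≠ i ∧ j ≠ i - 1 then p.2 i * p.1 j else 0)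
      (∑ i : Fin n, ∑ j : Fin n,
        if j ≠ i ∧ j ≠ i - 1 then u i • PX j + X j • PU i else 0) (X, u) := by
    refine HasFDerivAt.fun_sum fun i _ => HasFDerivAt.fun_sum fun j _ => ?_
    by_cases h : j ≠ i ∧ j ≠ i - 1
    · simpa [h] using (hPU i).fun_mul (hPX j)
    · simpa [h] using hasFDerivAt_const (0 : ℝ) ((X, u) : (Fin n → ℝ) × (Fin n → ℝ))
  have hA := ((((hs1.fun_mul hs1).fun_mul hs1).fun_sub ((hs1.fun_mul hs2).const_mul 3)).fun_add
      (hs3.const_mul 2)).const_mul (6 : ℝ)⁻¹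
  have hI3 := hA.fun_sub hB
  rw [← toda_I3_eq] at hI3
  refine ⟨_, hs1.prodMk hI3, fun v => ?_, fun j => ?_, fun k => ?_⟩
  · simp [PU]
  · have hPU0 : ∀ i : Fin n, PU i ((Pi.single j 1 : Fin n → ℝ), (0 : Fin n → ℝ)) = 0 := by
      intro i; simp [PU]
    have hPXv : ∀ d : Fin n, PX d ((Pi.single j 1 : Fin n → ℝ), (0 : Fin n → ℝ))
        = if d = j then 1 else 0 := by
      intro d; simp [PX, Pi.single_apply]
    have key : ∀ x d : Fin n,
        (if d ≠ x ∧ d ≠ x - 1 then u x • PX d + X d • PU x else 0)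
            ((Pi.single j 1 : Fin n → ℝ), (0 : Fin n → ℝ))
          = if d = j then (if x ≠ j ∧ x ≠ j + 1 then u x else 0) else 0 := by
      intro x d
      have hcond : (d ≠ x ∧ d ≠ x - 1) = (x ≠ d ∧ x ≠ d + 1) := by
        apply propext
        constructor
        · rintro ⟨h1, h2⟩
          exact ⟨Ne.symm h1, fun hx => h2 (by rw [hx, add_sub_cancel_right])⟩
        · rintro ⟨h1, h2⟩
          exact ⟨Ne.symm h1, fun hx => h2 (by rw [eq_sub_iff_add_eq] at hx; exact hx.symm)⟩
      by_cases h2 : d = j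
      · subst h2
        simp only [hcond]
        by_cases h : x ≠ d ∧ x ≠ d + 1 <;>
          simp [h, hPU0, hPXv]
      · by_cases h : d ≠ x ∧ d ≠ x - 1 <;>
          simp [h, h2, hPU0, hPXv]
    simp only [ContinuousLinearMap.prod_apply, ContinuousLinearMap.coe_sub',
      Pi.sub_apply, ContinuousLinearMap.coe_smul', Pi.smul_apply,
      ContinuousLinearMap.add_apply, ContinuousLinearMap.sub_apply,
      ContinuousLinearMap.sum_apply, ContinuousLinearMap.smul_apply,
      smul_eq_mul, key, hPU0, hPXv]
    rw [Finset.sum_comm]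
    simp only [Finset.sum_const_zero, mul_zero, zero_mul, add_zero, zero_add, zero_sub]
    have hswap : ∀ y : Fin n, (∑ x : Fin n,
        if y = j then if x ≠ j ∧ x ≠ j + 1 then u x else 0 else 0)
        = if y = j then (∑ x : Fin n, if x ≠ j ∧ x ≠ j + 1 then u x else 0) else 0 :=
      fun y => by split_ifs <;> simp
    rw [Finset.sum_congr rfl fun y _ => hswap y, Finset.sum_ite_eq' Finset.univ j]
    simp only [Finset.mem_univ, if_true]
    rw [toda_sum_pair_compl j (j + 1) (Ne.symm (fin_succ_ne hn j)) u]
    ring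
  · have hk1 : k ≠ k - 1 := by
      have h := fin_succ_ne hn (k - 1)
      rw [sub_add_cancel] at h
      exact h
    have hPUv : ∀ i : Fin n, PU i ((0 : Fin n → ℝ), (Pi.single k 1 : Fin n → ℝ))
        = if i = k then 1 else 0 := by
      intro i; simp [PU, Pi.single_apply]
    have hPX0 : ∀ d : Fin n, PX d ((0 : Fin n → ℝ), (Pi.single k 1 : Fin n → ℝ)) = 0 := by
      intro d; simp [PX]
    have key : ∀ x d : Fin n,
        (if d ≠ x ∧ d ≠ x - 1 then u x • PX d + X d • PU x else 0)
            ((0 : Fin n → ℝ), (Pi.single k 1 : Fin n → ℝ))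
          = if x = k then (if d ≠ k ∧ d ≠ k - 1 then X d else 0) else 0 := by
      intro x d
      by_cases h2 : x = k
      · subst h2
        by_cases h : d ≠ x ∧ d ≠ x - 1 <;> simp [h, hPUv, hPX0]
      · by_cases h : d ≠ x ∧ d ≠ x - 1 <;> simp [h, h2, hPUv, hPX0]
    simp only [ContinuousLinearMap.prod_apply, ContinuousLinearMap.coe_sub',
      Pi.sub_apply, ContinuousLinearMap.coe_smul', Pi.smul_apply,
      ContinuousLinearMap.add_apply, ContinuousLinearMap.sub_apply,
      ContinuousLinearMap.sum_apply, ContinuousLinearMap.smul_apply,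
      smul_eq_mul, key, hPUv, hPX0, mul_ite, mul_one, mul_zero,
      Finset.sum_ite_eq' Finset.univ k, Finset.mem_univ, if_true]
    have hsum1 : ∑ x : Fin n, ((if x = k then u x else 0) + if x = k then u x else 0)
        = u k + u k := by
      rw [Finset.sum_add_distrib]; simp
    have hsum2 : ∑ x : Fin n,
        ((if x = k then u x * u x else 0)
          + u x * ((if x = k then u x else 0) + if x = k then u x else 0))
        = u k * u k + u k * (u k + u k) := by
      have h1 : ∀ x : Fin n, (if x = k then u x * u x else 0)
          + u x * ((if x = k then u x else 0) + if x = k then u x else 0)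
          = (if x = k then u x * u x + u x * (u x + u x) else 0) := by
        intro x; split_ifs <;> simp
      rw [Finset.sum_congr rfl fun x _ => h1 x, Finset.sum_ite_eq' Finset.univ k]
      simp
    have hsum3 : ∑ x : Fin n, ∑ x1 : Fin n,
        (if x = k then if x1 ≠ k ∧ x1 ≠ k - 1 then X x1 else 0 else 0)
        = (∑ j : Fin n, X j) - X k - X (k - 1) := by
      have hswap : ∀ x : Fin n, (∑ x1 : Fin n,
          if x = k then if x1 ≠ k ∧ x1 ≠ k - 1 then X x1 else 0 else 0)
          = if x = k then (∑ x1 : Fin n, if x1 ≠ k ∧ x1 ≠ k - 1 then X x1 else 0) else 0 := by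
        intro x; split_ifs <;> simp
      rw [Finset.sum_congr rfl fun x _ => hswap x]
      rw [Finset.sum_ite_eq' Finset.univ k]
      simp only [Finset.mem_univ, if_true]
      exact toda_sum_pair_compl k (k - 1) hk1 X
    rw [hsum1, hsum2, hsum3]
    have e2 : ∑ i : Fin n, u i * u i = ∑ i : Fin n, u i ^ 2 :=
      Finset.sum_congr rfl fun i _ => (pow_two (u i)).symm
    rw [e2]
    ring

lemma toda_det_zero {S : Submodule ℝ (ℝ × ℝ)} (hS : Module.finrank ℝ S ≤ 1)
    {a b : ℝ × ℝ} (ha : a ∈ S) (hb : b ∈ S) : a.1 * b.2 - a.2 * b.1 = 0 := by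
  obtain ⟨v, hv⟩ := finrank_le_one_iff.mp hS
  obtain ⟨c, hc⟩ := hv ⟨a, ha⟩
  obtain ⟨d, hd⟩ := hv ⟨b, hb⟩
  have hc' : c • (v : ℝ × ℝ) = a := congrArg Subtype.val hc
  have hd' : d • (v : ℝ × ℝ) = b := congrArg Subtype.val hd
  rw [← hc', ← hd']
  simp only [Prod.smul_fst, Prod.smul_snd, smul_eq_mul]
  ring

lemma toda_clm_decomp {n : ℕ} (D : ((Fin n → ℝ) × (Fin n → ℝ)) →L[ℝ] (ℝ × ℝ))
    (v : (Fin n → ℝ) × (Fin n → ℝ)) :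
    D v = (∑ j, v.1 j • D (Pi.single j 1, 0)) + ∑ k, v.2 k • D (0, Pi.single k 1) := by
  classical
  have h1 : ∀ (w : Fin n → ℝ) (j : Fin n),
      w j • (Pi.single j (1:ℝ) : Fin n → ℝ) = (Pi.single j (w j) : Fin n → ℝ) := by
    intro w j
    rw [← Pi.single_smul, smul_eq_mul, mul_one]
  have hv : (∑ j, v.1 j • ((Pi.single j 1 : Fin n → ℝ), (0 : Fin n → ℝ)))
      + (∑ k, v.2 k • ((0 : Fin n → ℝ), (Pi.single k 1 : Fin n → ℝ))) = v := by
    refine Prod.ext ?_ ?_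
    · simp only [Prod.fst_add, Prod.fst_sum, Prod.smul_fst, smul_zero,
        Finset.sum_const_zero, add_zero, h1, Finset.univ_sum_single]
    · simp only [Prod.snd_add, Prod.snd_sum, Prod.smul_snd, smul_zero,
        Finset.sum_const_zero, zero_add, h1, Finset.univ_sum_single]
  calc D v = D ((∑ j, v.1 j • ((Pi.single j 1 : Fin n → ℝ), (0 : Fin n → ℝ)))
      + (∑ k, v.2 k • ((0 : Fin n → ℝ), (Pi.single k 1 : Fin n → ℝ)))) := by rw [hv]
    _ = _ := by
      rw [map_add, map_sum, map_sum]
      simp only [map_smul]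

lemma toda_fin_add_two {n : ℕ} [NeZero n] {m : ℕ} (hm : m + 2 < n) :
    (⟨m, by omega⟩ : Fin n) + 1 + 1 = ⟨m + 2, hm⟩ := by
  have hn : 1 < n := by omega
  have h1 : (1 : Fin n).val = 1 := by
    simp [Fin.val_one', Nat.mod_eq_of_lt hn]
  apply Fin.ext
  rw [Fin.add_def, Fin.add_def, h1]
  simp only []
  rw [Nat.mod_eq_of_lt (by omega : m + 1 < n), Nat.mod_eq_of_lt (by omega : m + 1 + 1 < n)]

lemma toda_fin_alt {n : ℕ} [NeZero n] (hn : 2 ≤ n) (f : Fin n → ℝ)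
    (h : ∀ j : Fin n, f (j + 1 + 1) = f j) :
    ∀ i : Fin n, f i = if i.val % 2 = 0 then f 0 else f 1 := by
  have key : ∀ m : ℕ, ∀ hm : m < n, f ⟨m, hm⟩ = if m % 2 = 0 then f 0 else f 1 := by
    intro m
    induction m using Nat.strong_induction_on with
    | _ m ih =>
      intro hm
      match m, hm with
      | 0, hm => simp [show (⟨0, hm⟩ : Fin n) = 0 from rfl]
      | 1, hm =>
        have : (⟨1, hm⟩ : Fin n) = 1 := by
          apply Fin.ext
          simp [Fin.val_one', Nat.mod_eq_of_lt (by omega : 1 < n)]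
        simp [this]
      | (m' + 2), hm =>
        have h2 := h ⟨m', by omega⟩
        rw [toda_fin_add_two hm] at h2
        rw [h2, ih m' (by omega) (by omega)]
        have : (m' + 2) % 2 = m' % 2 := by omega
        rw [this]
  intro i
  have := key i.val i.isLt
  simpa using this

lemma toda_sum_range_alt (a b : ℝ) (m : ℕ) :
    ∑ i ∈ Finset.range (2 * m), (if i % 2 = 0 then a else b) = m * (a + b) := by
  induction m with
  | zero => simp
  | succ m ih =>
    have : 2 * (m + 1) = (2 * m + 1) + 1 := by ring
    rw [this, Finset.sum_range_succ, Finset.sum_range_succ, ih]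
    have h1 : (2 * m) % 2 = 0 := by omega
    have h2 : (2 * m + 1) % 2 = 1 := by omega
    rw [h1, h2]
    norm_num
    push_cast
    ring

lemma toda_sum_alt {n : ℕ} [NeZero n] {m : ℕ} (hm : n = 2 * m) (a b : ℝ) :
    ∑ i : Fin n, (if i.val % 2 = 0 then a else b) = m * (a + b) := by
  rw [Fin.sum_univ_eq_sum_range (fun i => if i % 2 = 0 then a else b) n, hm,
    toda_sum_range_alt]

lemma toda_val_add_one_mod {n : ℕ} [NeZero n] (hn : 2 ≤ n) (heven : Even n) (j : Fin n) :
    (j + 1).val % 2 = (j.val + 1) % 2 := by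
  have h1 : (1 : Fin n).val = 1 := by
    simp [Fin.val_one', Nat.mod_eq_of_lt (by omega : 1 < n)]
  rw [Fin.add_def, h1]
  obtain ⟨m, hm⟩ := heven
  exact Nat.mod_mod_of_dvd (j.val + 1) (by omega)


/-- For the periodic Toda lattice with an even number `n ≥ 4` of particles, the
Jacobian of `𝕀₁₃ = (I₁, I₃)` has rank at most `1` exactly at the alternating
configurations `(X₁,X₂,…,X₁,X₂,u₁,u₂,…,u₁,u₂)` with `u₁ + u₂ = 0`. -/
theorem todaPeriodic_I13_rank_le_one_iff_even
    (n : ℕ) [NeZero n] (hn : 4 ≤ n) (heven : Even n) (X u : Fin n → ℝ) :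
    Module.finrank ℝ (LinearMap.range (fderiv ℝ (todaPeriodicI13 n) (X, u)).toLinearMap) ≤ 1 ↔
      ∃ X₁ X₂ u₁ u₂ : ℝ, u₁ + u₂ = 0 ∧
        (∀ i : Fin n, X i = if i.val % 2 = 0 then X₁ else X₂) ∧
        (∀ i : Fin n, u i = if i.val % 2 = 0 then u₁ else u₂) := by
  classical
  obtain ⟨m, hmm⟩ := heven
  have hm : n = 2 * m := by omega
  have hm2 : 2 ≤ m := by omega
  have hn2 : 2 ≤ n := by omega
  obtain ⟨D, hD, h1v, hXval, hUval⟩ := toda_hasFDeriv n hn2 X u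
  rw [hD.fderiv]
  constructor
  · intro hrank
    have hC1 : ∀ j : Fin n, (∑ i, u i) - u j - u (j + 1) = 0 := by
      intro j
      have h := toda_det_zero hrank
        ⟨((0 : Fin n → ℝ), (Pi.single j 1 : Fin n → ℝ)), rfl⟩
        ⟨((Pi.single j 1 : Fin n → ℝ), (0 : Fin n → ℝ)), rfl⟩
      simp only [ContinuousLinearMap.coe_coe] at h
      rw [h1v, h1v, hXval j] at h
      simp at h
      linarith
    have hper : ∀ j : Fin n, u (j + 1 + 1) = u j := by
      intro j
      have h1 := hC1 j
      have h2 := hC1 (j + 1)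
      linarith
    have hualt := toda_fin_alt hn2 u hper
    have hsum : ∑ i, u i = m * (u 0 + u 1) := by
      rw [Finset.sum_congr rfl fun i _ => hualt i, toda_sum_alt hm]
    have h01 : u 0 + u 1 = ∑ i, u i := by
      have h := hC1 0
      rw [zero_add] at h
      linarith
    have hu01 : u 0 + u 1 = 0 := by
      have h2 : ((m : ℝ) - 1) * (u 0 + u 1) = 0 := by
        rw [sub_mul, ← hsum, ← h01]; ring
      rcases mul_eq_zero.mp h2 with h3 | h3
      · exfalso
        have : (2 : ℝ) ≤ (m : ℝ) := by exact_mod_cast hm2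
        linarith
      · exact h3
    have hUzero : ∑ i, u i = 0 := by rw [hsum, hu01, mul_zero]
    have husq : ∀ k : Fin n, u k ^ 2 = u 0 ^ 2 := by
      intro k
      rw [hualt k]
      split_ifs
      · rfl
      · have : u 1 = -u 0 := by linarith
        rw [this]; ring
    have hXsum : ∀ k l : Fin n, X k + X (k - 1) = X l + X (l - 1) := by
      intro k l
      have h := toda_det_zero hrank
        ⟨((0 : Fin n → ℝ), (Pi.single k 1 : Fin n → ℝ)), rfl⟩
        ⟨((0 : Fin n → ℝ), (Pi.single l 1 : Fin n → ℝ)), rfl⟩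
      simp only [ContinuousLinearMap.coe_coe] at h
      rw [h1v, h1v, hUval k, hUval l, hUzero, husq k, husq l] at h
      simp at h
      linarith
    have hXper : ∀ j : Fin n, X (j + 1 + 1) = X j := by
      intro j
      have h := hXsum (j + 1 + 1) (j + 1)
      rw [add_sub_cancel_right, add_sub_cancel_right] at h
      linarith
    have hXalt := toda_fin_alt hn2 X hXper
    exact ⟨X 0, X 1, u 0, u 1, hu01, hXalt, hualt⟩
  · rintro ⟨X₁, X₂, u₁, u₂, hu12, hX, hu⟩
    have hUzero : ∑ i, u i = 0 := by
      rw [Finset.sum_congr rfl fun i _ => hu i, toda_sum_alt hm, hu12, mul_zero]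
    have hflip : ∀ j : Fin n, u j + u (j + 1) = 0 := by
      intro j
      rw [hu j, hu (j + 1), toda_val_add_one_mod hn2 ⟨m, hmm⟩ j]
      by_cases hjp : j.val % 2 = 0
      · rw [if_pos hjp, if_neg (by omega)]; exact hu12
      · rw [if_neg hjp, if_pos (by omega)]; linarith
    have hXpair : ∀ k : Fin n, X k + X (k - 1) = X₁ + X₂ := by
      intro k
      have hk : k.val % 2 = ((k - 1).val + 1) % 2 := by
        have h := toda_val_add_one_mod hn2 ⟨m, hmm⟩ (k - 1)
        rw [sub_add_cancel] at h
        exact h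
      rw [hX k, hX (k - 1)]
      by_cases hp : (k - 1).val % 2 = 0
      · rw [if_pos hp, if_neg (by omega)]; ring
      · rw [if_neg hp, if_pos (by omega)]
    have husq : ∀ k : Fin n, u k ^ 2 = u₁ ^ 2 := by
      intro k
      rw [hu k]
      split_ifs
      · rfl
      · have : u₂ = -u₁ := by linarith
        rw [this]; ring
    set c : ℝ := ((0:ℝ) ^ 2 - ∑ i, u i ^ 2) / 2 + u₁ ^ 2
      - ((∑ j, X j) - (X₁ + X₂)) with hc
    have hDU : ∀ k : Fin n, D (0, Pi.single k 1) = (1, c) := by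
      intro k
      refine Prod.ext ?_ ?_
      · rw [h1v]; simp
      · rw [hUval k, hUzero, husq k]
        have h := hXpair k
        show _ = c
        rw [hc]
        linarith
    have hDX : ∀ j : Fin n, D (Pi.single j 1, 0) = (0, 0) := by
      intro j
      refine Prod.ext ?_ ?_
      · rw [h1v]; simp
      · rw [hXval j]
        have h := hflip j
        show _ = (0 : ℝ)
        linarith [hUzero]
    have hDv : ∀ v, D v = (∑ i, v.2 i) • ((1:ℝ), c) := by
      intro v
      rw [toda_clm_decomp D v]
      simp only [hDX, hDU, Prod.mk_zero_zero, smul_zero, Finset.sum_const_zero,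
        zero_add]
      rw [← Finset.sum_smul]
    have h2 : Module.finrank ℝ (Submodule.span ℝ {((1:ℝ), c)}) = 1 :=
      finrank_span_singleton (by
        intro h
        have := congrArg Prod.fst h
        simp at this)
    refine le_trans (Submodule.finrank_mono ?_) (le_of_eq h2)
    rintro x ⟨v, memrfl⟩
    rw [← memrfl]
    exact Submodule.mem_span_singleton.mpr ⟨∑ i, v.2 i, (hDv v).symm⟩
end

section
/- Let n ≥ 2 be even. On ℝ^{n−1} × ℝⁿ with coordinates (X₁,...,X_{n−1},u₁,...,uₙ) define F₁ = Σ_{i=1}^n u_i, F₂ = Σ_{i=1}^{n−1} X_i + Σ_{i=1}^n u_i²/2, and F₃ = Σ_{i=1}^{n−1} X_i(u_i + u_{i+1}) + (1/3) Σ_{i=1}^n u_i³, and let 𝔽₁₂₃ = (F₁,F₂,F₃) : ℝ^{2n−1} → ℝ³. Then rank ∇𝔽₁₂₃(X,u) ≤ 2 if and only if there exist X, u₁, u₂ ∈ ℝ such that X_i = X for all odd i, X_i = 0 for all even i, u_i = u₁ for all odd i, and u_i = u₂ for all even i (with X, u₁, u₂ arbitrary). -/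
/-- The conserved quantity `F₁ = Σᵢ uᵢ` of the non-periodic Toda lattice with
`n = m + 1` particles. -/
noncomputable def todaOpenF1 (m : ℕ) (p : (Fin m → ℝ) × (Fin (m + 1) → ℝ)) : ℝ :=
  ∑ i : Fin (m + 1), p.2 i

/-- The conserved quantity `F₂ = Σᵢ Xᵢ + Σᵢ uᵢ²/2` of the non-periodic Toda
lattice with `n = m + 1` particles. -/
noncomputable def todaOpenF2 (m : ℕ) (p : (Fin m → ℝ) × (Fin (m + 1) → ℝ)) : ℝ :=
  (∑ i : Fin m, p.1 i) + ∑ i : Fin (m + 1), p.2 i ^ 2 / 2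

/-- The conserved quantity `F₃ = Σᵢ Xᵢ(uᵢ + uᵢ₊₁) + (1/3) Σᵢ uᵢ³` of the
non-periodic Toda lattice with `n = m + 1` particles. -/
noncomputable def todaOpenF3 (m : ℕ) (p : (Fin m → ℝ) × (Fin (m + 1) → ℝ)) : ℝ :=
  (∑ i : Fin m, p.1 i * (p.2 i.castSucc + p.2 i.succ))
    + (1 / 3) * ∑ i : Fin (m + 1), p.2 i ^ 3

/-- The vectorial conserved quantity `𝔽₁₂₃ = (F₁, F₂, F₃)`. -/
noncomputable def todaOpenF123 (m : ℕ)
    (p : (Fin m → ℝ) × (Fin (m + 1) → ℝ)) : ℝ × ℝ × ℝ :=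
  (todaOpenF1 m p, todaOpenF2 m p, todaOpenF3 m p)

section D
variable (m : ℕ)

open ContinuousLinearMap

noncomputable def cXm (i : Fin m) : ((Fin m → ℝ) × (Fin (m+1) → ℝ)) →L[ℝ] ℝ :=
  (proj i).comp (fst ℝ (Fin m → ℝ) (Fin (m+1) → ℝ))

noncomputable def cUm (k : Fin (m+1)) : ((Fin m → ℝ) × (Fin (m+1) → ℝ)) →L[ℝ] ℝ :=
  (proj k).comp (snd ℝ (Fin m → ℝ) (Fin (m+1) → ℝ))

@[simp] lemma cXm_apply (i : Fin m) (v) : cXm m i v = v.1 i := rfl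
@[simp] lemma cUm_apply (k : Fin (m+1)) (v) : cUm m k v = v.2 k := rfl

variable (X : Fin m → ℝ) (u : Fin (m+1) → ℝ)

noncomputable def D1 : ((Fin m → ℝ) × (Fin (m+1) → ℝ)) →L[ℝ] ℝ := ∑ k, cUm m k

noncomputable def D2 : ((Fin m → ℝ) × (Fin (m+1) → ℝ)) →L[ℝ] ℝ :=
  (∑ i, cXm m i) + ∑ k, u k • cUm m k

noncomputable def D3 : ((Fin m → ℝ) × (Fin (m+1) → ℝ)) →L[ℝ] ℝ :=
  (∑ i, ((u i.castSucc + u i.succ) • cXm m i + X i • (cUm m i.castSucc + cUm m i.succ)))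
    + ∑ k, (u k ^ 2) • cUm m k

lemma hasD1 : HasFDerivAt (todaOpenF1 m) (D1 m) (X, u) :=
  HasFDerivAt.fun_sum fun k _ => (cUm m k).hasFDerivAt

lemma hasD2 : HasFDerivAt (todaOpenF2 m) (D2 m u) (X, u) := by
  have h1 : HasFDerivAt (fun p : (Fin m → ℝ) × (Fin (m+1) → ℝ) => ∑ i, p.1 i)
      (∑ i, cXm m i) (X, u) := HasFDerivAt.fun_sum fun i _ => (cXm m i).hasFDerivAt
  have h2 : HasFDerivAt (fun p : (Fin m → ℝ) × (Fin (m+1) → ℝ) => ∑ k, p.2 k ^ 2 / 2)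
      (∑ k, u k • cUm m k) (X, u) := by
    simp only [pow_two]
    have := HasFDerivAt.fun_sum (fun k (_ : k ∈ Finset.univ) =>
      ((((cUm m k).hasFDerivAt (x := (X, u))).mul ((cUm m k).hasFDerivAt)).mul_const (2⁻¹ : ℝ)))
    simp only [div_eq_mul_inv]
    refine this.congr_fderiv ?_
    refine ContinuousLinearMap.ext fun v => ?_
    simp [Finset.sum_apply]
    refine Finset.sum_congr rfl fun k _ => by ring
  exact h1.add h2

lemma hasD3 : HasFDerivAt (todaOpenF3 m) (D3 m X u) (X, u) := by
  have h1 : HasFDerivAt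
      (fun p : (Fin m → ℝ) × (Fin (m+1) → ℝ) => ∑ i, p.1 i * (p.2 i.castSucc + p.2 i.succ))
      (∑ i, ((u i.castSucc + u i.succ) • cXm m i + X i • (cUm m i.castSucc + cUm m i.succ))) (X, u) := by
    have := HasFDerivAt.fun_sum (fun i (_ : i ∈ Finset.univ) =>
      ((cXm m i).hasFDerivAt (x := (X, u))).mul
        (((cUm m i.castSucc).hasFDerivAt (x := (X, u))).add ((cUm m i.succ).hasFDerivAt)))
    refine this.congr_fderiv ?_
    ext v <;> simp <;> ring
  have h2 : HasFDerivAt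
      (fun p : (Fin m → ℝ) × (Fin (m+1) → ℝ) => (1/3 : ℝ) * ∑ k, p.2 k ^ 3)
      (∑ k, (u k ^ 2) • cUm m k) (X, u) := by
    simp only [show ∀ a : ℝ, a ^ 3 = a * a * a from fun a => by ring]
    have := (HasFDerivAt.fun_sum (fun k (_ : k ∈ Finset.univ) =>
      (((cUm m k).hasFDerivAt (x := (X, u))).mul ((cUm m k).hasFDerivAt)).mul
        ((cUm m k).hasFDerivAt))).const_mul (1/3 : ℝ)
    refine this.congr_fderiv ?_
    refine ContinuousLinearMap.ext fun v => ?_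
    simp [Finset.mul_sum]
    refine Finset.sum_congr rfl fun k _ => by ring
  exact h1.add h2

noncomputable def Dtoda : ((Fin m → ℝ) × (Fin (m+1) → ℝ)) →L[ℝ] ℝ × ℝ × ℝ :=
  (D1 m).prod ((D2 m u).prod (D3 m X u))

lemma hasD123 : HasFDerivAt (todaOpenF123 m)
    (Dtoda m X u) (X, u) :=
  (hasD1 m X u).prodMk ((hasD2 m X u).prodMk (hasD3 m X u))

/-- The indicator-sum giving the `u`-slot coefficients from `X`. -/
noncomputable def Aop (X : Fin m → ℝ) (k : Fin (m+1)) : ℝ :=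
  ∑ i : Fin m, X i * ((if i.castSucc = k then (1:ℝ) else 0) + (if i.succ = k then 1 else 0))

lemma Dtoda_apply (v : (Fin m → ℝ) × (Fin (m+1) → ℝ)) :
    Dtoda m X u v =
      (∑ k, v.2 k,
       (∑ i, v.1 i) + ∑ k, u k * v.2 k,
       (∑ i, (v.1 i * (u i.castSucc + u i.succ) + X i * (v.2 i.castSucc + v.2 i.succ)))
         + ∑ k, u k ^ 2 * v.2 k) := by
  simp [Dtoda, D1, D2, D3, Finset.sum_apply, mul_comm, mul_add]

lemma fderiv_toda_eq : fderiv ℝ (todaOpenF123 m) (X, u) = Dtoda m X u :=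
  (hasD123 m X u).fderiv

lemma Dtoda_X (i : Fin m) :
    Dtoda m X u (Pi.single i 1, 0) = (0, 1, u i.castSucc + u i.succ) := by
  rw [Dtoda_apply]
  simp [Pi.single_apply]

lemma Dtoda_U (k : Fin (m+1)) :
    Dtoda m X u (0, Pi.single k 1) = (1, u k, Aop m X k + u k ^ 2) := by
  rw [Dtoda_apply, Aop]
  simp [Pi.single_apply, Finset.sum_add_distrib, mul_add]

end D

section Rank

lemma finrank_RRR : Module.finrank ℝ (ℝ × ℝ × ℝ) = 3 := by
  simp [Module.finrank_prod]

lemma top_of_mem (P : Submodule ℝ (ℝ × ℝ × ℝ)) (c s y z : ℝ) (hc : c ≠ 0)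
    (h1 : ((0 : ℝ), (0 : ℝ), c) ∈ P) (h2 : ((0 : ℝ), (1 : ℝ), s) ∈ P)
    (h3 : ((1 : ℝ), y, z) ∈ P) : P = ⊤ := by
  have e3 : ((0 : ℝ), (0 : ℝ), (1 : ℝ)) ∈ P := by
    have := P.smul_mem c⁻¹ h1
    simpa [Prod.smul_mk, inv_mul_cancel₀ hc] using this
  have e2 : ((0 : ℝ), (1 : ℝ), (0 : ℝ)) ∈ P := by
    have := P.sub_mem h2 (P.smul_mem s e3)
    simpa using this
  have e1 : ((1 : ℝ), (0 : ℝ), (0 : ℝ)) ∈ P := by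
    have := P.sub_mem (P.sub_mem h3 (P.smul_mem y e2)) (P.smul_mem z e3)
    convert this using 1
    ext <;> simp
  rw [eq_top_iff]
  rintro ⟨p, q, r⟩ -
  have := P.add_mem (P.add_mem (P.smul_mem p e1) (P.smul_mem q e2)) (P.smul_mem r e3)
  simpa using this

noncomputable def phi3 (a s : ℝ) : (ℝ × ℝ × ℝ) →ₗ[ℝ] ℝ :=
  a • LinearMap.fst ℝ ℝ (ℝ × ℝ)
    + s • ((LinearMap.fst ℝ ℝ ℝ).comp (LinearMap.snd ℝ ℝ (ℝ × ℝ)))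
    - (LinearMap.snd ℝ ℝ ℝ).comp (LinearMap.snd ℝ ℝ (ℝ × ℝ))

@[simp] lemma phi3_apply (a s : ℝ) (x : ℝ × ℝ × ℝ) :
    phi3 a s x = a * x.1 + s * x.2.1 - x.2.2 := by
  simp [phi3, smul_eq_mul]

lemma finrank_ker_phi3 (a s : ℝ) : Module.finrank ℝ (LinearMap.ker (phi3 a s)) = 2 := by
  have hsurj : Function.Surjective (phi3 a s) := fun x => ⟨(0, 0, -x), by simp⟩
  have h := LinearMap.finrank_range_add_finrank_ker (phi3 a s)
  rw [LinearMap.range_eq_top.mpr hsurj, finrank_top, finrank_RRR,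
    Module.finrank_self] at h
  omega

end Rank

section Asec
variable (m : ℕ) (X : Fin m → ℝ)

lemma Aop_eq (k : Fin (m+1)) :
    Aop m X k = (if h : k.val < m then X ⟨k.val, h⟩ else 0)
      + (if h : 0 < k.val then X ⟨k.val - 1, by omega⟩ else 0) := by
  rw [Aop]
  simp only [mul_add, Finset.sum_add_distrib, mul_ite, mul_one, mul_zero]
  congr 1
  · by_cases h : k.val < m
    · rw [dif_pos h, Finset.sum_eq_single (⟨k.val, h⟩ : Fin m)]
      · rw [if_pos (by exact Fin.ext rfl)]
      · intro b _ hb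
        refine if_neg fun hbe => hb (Fin.ext ?_)
        have := congrArg Fin.val hbe
        simpa using this
      · intro habs; exact absurd (Finset.mem_univ _) habs
    · rw [dif_neg h]
      refine Finset.sum_eq_zero fun i _ => if_neg fun hie => h ?_
      have := congrArg Fin.val hie
      simp only [Fin.coe_castSucc] at this
      omega
  · by_cases h : 0 < k.val
    · have hk1 : k.val - 1 < m := by omega
      rw [dif_pos h, Finset.sum_eq_single (⟨k.val - 1, hk1⟩ : Fin m)]
      · rw [if_pos (by exact Fin.ext (by simp [Fin.val_succ]; omega))]
      · intro b _ hb
        refine if_neg fun hbe => hb (Fin.ext ?_)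
        have := congrArg Fin.val hbe
        simp only [Fin.val_succ] at this
        show (b : ℕ) = k.val - 1
        omega
      · intro habs; exact absurd (Finset.mem_univ _) habs
    · rw [dif_neg h]
      refine Finset.sum_eq_zero fun i _ => if_neg fun hie => h ?_
      have := congrArg Fin.val hie
      simp only [Fin.val_succ] at this
      omega

lemma Aop_sum (w : Fin (m+1) → ℝ) :
    ∑ k, Aop m X k * w k = ∑ i : Fin m, X i * (w i.castSucc + w i.succ) := by
  simp only [Aop, Finset.sum_mul]
  rw [Finset.sum_comm]
  refine Finset.sum_congr rfl fun i _ => ?_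
  simp only [add_mul, ite_mul, one_mul, zero_mul, mul_ite, mul_zero,
    Finset.sum_add_distrib, Finset.sum_ite_eq, Finset.mem_univ, if_true, mul_add, mul_one]

end Asec

section Alg
variable (m : ℕ)

lemma u_pattern (hm : 1 ≤ m) (u : Fin (m+1) → ℝ) (s : ℝ)
    (hs : ∀ i : Fin m, u i.castSucc + u i.succ = s) :
    ∀ k : Fin (m+1), u k = if k.val % 2 = 0 then u ⟨0, by omega⟩ else u ⟨1, by omega⟩ := by
  set u₁ := u ⟨0, by omega⟩ with hu₁
  set u₂ := u ⟨1, by omega⟩ with hu₂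
  have hsum : u₁ + u₂ = s := by
    have := hs ⟨0, hm⟩
    simpa [Fin.castSucc, Fin.succ, hu₁, hu₂] using this
  have key : ∀ j (h : j < m + 1), u ⟨j, h⟩ = if j % 2 = 0 then u₁ else u₂ := by
    intro j
    induction j with
    | zero => intro h; simp [hu₁]
    | succ j ih =>
      intro h
      have hj : j < m := by omega
      have hstep := hs ⟨j, hj⟩
      have hc : (⟨j, hj⟩ : Fin m).castSucc = ⟨j, by omega⟩ := rfl
      have hsc : (⟨j, hj⟩ : Fin m).succ = ⟨j + 1, h⟩ := rfl
      rw [hc, hsc, ih (by omega)] at hstep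
      rcases Nat.even_or_odd j with hj2 | hj2
      · have h0 : j % 2 = 0 := Nat.even_iff.mp hj2
        rw [if_pos h0] at hstep
        rw [if_neg (by omega)]
        linarith
      · have h1 : j % 2 = 1 := Nat.odd_iff.mp hj2
        rw [if_neg (by omega)] at hstep
        rw [if_pos (by omega)]
        linarith
  intro k
  have := key k.val k.isLt
  simpa using this

lemma X_pattern (hm : 1 ≤ m) (X : Fin m → ℝ) (Xc : ℝ)
    (hA : ∀ k : Fin (m+1), Aop m X k = Xc) :
    ∀ i : Fin m, X i = if i.val % 2 = 0 then Xc else 0 := by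
  have key : ∀ j (h : j < m), X ⟨j, h⟩ = if j % 2 = 0 then Xc else 0 := by
    intro j
    induction j with
    | zero =>
      intro h
      have := hA ⟨0, by omega⟩
      rw [Aop_eq] at this
      rw [dif_pos (by simpa using h), dif_neg (by simp)] at this
      simpa using this
    | succ j ih =>
      intro h
      have := hA ⟨j + 1, by omega⟩
      rw [Aop_eq] at this
      rw [dif_pos (by simpa using h), dif_pos (by simp)] at this
      simp only [Fin.val_mk, Nat.add_sub_cancel] at this
      rw [ih (by omega)] at this
      rcases Nat.even_or_odd j with hj2 | hj2
      · have h0 : j % 2 = 0 := Nat.even_iff.mp hj2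
        rw [if_pos h0] at this
        rw [if_neg (by omega)]
        linarith
      · have h1 : j % 2 = 1 := Nat.odd_iff.mp hj2
        rw [if_neg (by omega)] at this
        rw [if_pos (by omega)]
        linarith
  intro i
  have := key i.val i.isLt
  simpa using this

end Alg

/-- For the non-periodic Toda lattice with an even number `n = m + 1 ≥ 2` of
particles, the Jacobian of `𝔽₁₂₃ = (F₁, F₂, F₃)` has rank at most `2` exactly
at the configurations `(X,0,…,X,0,X,u₁,u₂,…,u₁,u₂)` with `X, u₁, u₂`
arbitrary. -/
theorem todaOpen_F123_rank_le_two_iff_even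
    (m : ℕ) (heven : Even (m + 1)) (X : Fin m → ℝ) (u : Fin (m + 1) → ℝ) :
    Module.finrank ℝ (LinearMap.range (fderiv ℝ (todaOpenF123 m) (X, u) : (Fin m → ℝ) × (Fin (m + 1) → ℝ) →ₗ[ℝ] ℝ × ℝ × ℝ)) ≤ 2 ↔
      ∃ Xc u₁ u₂ : ℝ,
        (∀ i : Fin m, X i = if i.val % 2 = 0 then Xc else 0) ∧
        (∀ i : Fin (m + 1), u i = if i.val % 2 = 0 then u₁ else u₂) := by

  obtain ⟨r, hr⟩ := heven
  have hm : 1 ≤ m := by omega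
  have hm1 : m % 2 = 1 := by omega
  rw [fderiv_toda_eq m X u]
  set R := LinearMap.range (Dtoda m X u : (Fin m → ℝ) × (Fin (m + 1) → ℝ) →ₗ[ℝ] ℝ × ℝ × ℝ) with hR
  constructor
  · intro hrank
    set i0 : Fin m := ⟨0, hm⟩ with hi0
    set s : ℝ := u i0.castSucc + u i0.succ with hsdef
    have hz : ∀ c : ℝ, ((0 : ℝ), (0 : ℝ), c) ∈ R → c = 0 := by
      intro c hc
      by_contra hc0
      have h2 : ((0 : ℝ), (1 : ℝ), s) ∈ R := ⟨_, Dtoda_X m X u i0⟩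
      have h3 : ((1 : ℝ), u ⟨0, by omega⟩, Aop m X ⟨0, by omega⟩ + u ⟨0, by omega⟩ ^ 2) ∈ R :=
        ⟨_, Dtoda_U m X u ⟨0, by omega⟩⟩
      have htop := top_of_mem R c s _ _ hc0 hc h2 h3
      rw [htop, finrank_top, finrank_RRR] at hrank
      omega
    have hs : ∀ i : Fin m, u i.castSucc + u i.succ = s := by
      intro i
      have h1 : ((0 : ℝ), (1 : ℝ), u i.castSucc + u i.succ) ∈ R := ⟨_, Dtoda_X m X u i⟩
      have h2 : ((0 : ℝ), (1 : ℝ), s) ∈ R := ⟨_, Dtoda_X m X u i0⟩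
      have hmem : ((0 : ℝ), (0 : ℝ), (u i.castSucc + u i.succ) - s) ∈ R := by
        have := R.sub_mem h1 h2
        simpa using this
      have := hz _ hmem
      linarith
    set a : ℝ := Aop m X ⟨0, by omega⟩ + u ⟨0, by omega⟩ ^ 2 - s * u ⟨0, by omega⟩ with hadef
    have ht : ∀ k : Fin (m+1), Aop m X k + u k ^ 2 = a + s * u k := by
      intro k
      have h1 : ((1 : ℝ), u k, Aop m X k + u k ^ 2) ∈ R := ⟨_, Dtoda_U m X u k⟩
      have h2 : ((1 : ℝ), u ⟨0, by omega⟩, Aop m X ⟨0, by omega⟩ + u ⟨0, by omega⟩ ^ 2) ∈ R :=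
        ⟨_, Dtoda_U m X u ⟨0, by omega⟩⟩
      have h3 : ((0 : ℝ), (1 : ℝ), s) ∈ R := ⟨_, Dtoda_X m X u i0⟩
      have hmem : ((0 : ℝ), (0 : ℝ),
          (Aop m X k + u k ^ 2) - (Aop m X ⟨0, by omega⟩ + u ⟨0, by omega⟩ ^ 2)
            - (u k - u ⟨0, by omega⟩) * s) ∈ R := by
        have hmm := R.sub_mem (R.sub_mem h1 h2) (R.smul_mem (u k - u ⟨0, by omega⟩) h3)
        have heq : ((0 : ℝ), (0 : ℝ),
            (Aop m X k + u k ^ 2) - (Aop m X ⟨0, by omega⟩ + u ⟨0, by omega⟩ ^ 2)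
              - (u k - u ⟨0, by omega⟩) * s)
            = (((1 : ℝ), u k, Aop m X k + u k ^ 2)
                - ((1 : ℝ), u ⟨0, by omega⟩, Aop m X ⟨0, by omega⟩ + u ⟨0, by omega⟩ ^ 2))
              - (u k - u ⟨0, by omega⟩) • ((0 : ℝ), (1 : ℝ), s) := by
          simp [Prod.ext_iff, smul_eq_mul]
        rw [heq]
        exact hmm
      have := hz _ hmem
      linear_combination this - hadef
    have hu := u_pattern m hm u s hs
    have hsum : u ⟨0, by omega⟩ + u ⟨1, by omega⟩ = s := by
      have := hs i0
      simpa [hi0, Fin.castSucc, Fin.succ] using this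
    refine ⟨a + u ⟨0, by omega⟩ * u ⟨1, by omega⟩, u ⟨0, by omega⟩, u ⟨1, by omega⟩, ?_, ?_⟩
    · refine X_pattern m hm X _ (fun k => ?_)
      have h1 := ht k
      have h2 := hu k
      by_cases h : k.val % 2 = 0
      · rw [if_pos h] at h2
        rw [h2] at h1
        linear_combination h1 - u ⟨0, by omega⟩ * hsum
      · rw [if_neg h] at h2
        rw [h2] at h1
        linear_combination h1 - u ⟨1, by omega⟩ * hsum
    · intro i
      exact hu i
  · rintro ⟨Xc, u₁, u₂, hX, hu⟩
    have hs : ∀ i : Fin m, u i.castSucc + u i.succ = u₁ + u₂ := by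
      intro i
      rw [hu, hu]
      simp only [Fin.coe_castSucc, Fin.val_succ]
      by_cases h : i.val % 2 = 0
      · rw [if_pos h, if_neg (by omega)]
      · rw [if_neg h, if_pos (by omega)]
        ring
    have hA : ∀ k : Fin (m+1), Aop m X k = Xc := by
      intro k
      rw [Aop_eq]
      by_cases h1 : k.val < m
      · by_cases h2 : 0 < k.val
        · rw [dif_pos h1, dif_pos h2, hX, hX]
          simp only [Fin.val_mk]
          by_cases h : k.val % 2 = 0
          · rw [if_pos h, if_neg (by omega)]
            ring
          · rw [if_neg h, if_pos (by omega)]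
            ring
        · rw [dif_pos h1, dif_neg h2, hX]
          simp only [Fin.val_mk]
          rw [if_pos (by omega)]
          ring
      · have hk : k.val = m := by omega
        rw [dif_neg h1, dif_pos (by omega), hX]
        simp only [Fin.val_mk, hk]
        rw [if_pos (by omega)]
        ring
    have hker : R ≤ LinearMap.ker (phi3 (Xc - u₁ * u₂) (u₁ + u₂)) := by
      rintro x ⟨v, rfl⟩
      rw [LinearMap.mem_ker]
      rw [ContinuousLinearMap.coe_coe, Dtoda_apply, phi3_apply]
      have e1 : ∑ i : Fin m, v.1 i * (u i.castSucc + u i.succ)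
          = (u₁ + u₂) * ∑ i : Fin m, v.1 i := by
        rw [Finset.mul_sum]
        exact Finset.sum_congr rfl fun i _ => by rw [hs i]; ring
      have e2 : ∑ i : Fin m, X i * (v.2 i.castSucc + v.2 i.succ) = ∑ k, Xc * v.2 k := by
        rw [← Aop_sum m X v.2]
        exact Finset.sum_congr rfl fun k _ => by rw [hA k]
      have esum : ∑ k : Fin (m+1), ((Xc - u₁ * u₂) * v.2 k + (u₁ + u₂) * (u k * v.2 k)
          - (Xc * v.2 k + u k ^ 2 * v.2 k)) = 0 := by
        refine Finset.sum_eq_zero fun k _ => ?_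
        rw [hu k]
        by_cases h : k.val % 2 = 0
        · rw [if_pos h]; ring
        · rw [if_neg h]; ring
      simp only [Finset.sum_add_distrib, Finset.sum_sub_distrib, ← Finset.mul_sum] at esum ⊢
      rw [e1, e2] at *
      simp only [← Finset.mul_sum] at *
      linarith [esum]
    calc Module.finrank ℝ R ≤ Module.finrank ℝ (LinearMap.ker (phi3 (Xc - u₁ * u₂) (u₁ + u₂))) :=
          Submodule.finrank_mono hker
      _ = 2 := finrank_ker_phi3 _ _
end
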